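/- arXiv:1006.2628 — 6 statements merged into one kernel-verified Lean document; each statement's English description precedes it below -/
import Mathlib

section
/- Let n ≥ 2 and q ≥ 2. The edge clique cover number of the Hamming graph H(n,q) equals n·q^{n−1}; i.e., the minimum size of a family of cliques covering all edges of H(n,q) is n·q^{n−1}. -/
open SimpleGraph

/-- The Hamming graph H(n,q): vertices are `Fin n → Fin q`, adjacent iff Hamming distance 1. -/
def hammingGraph (n q : ℕ) : SimpleGraph (Fin n → Fin q) where
  Adj x y := hammingDist x y = 1
  symm := ⟨by intro x y h; rwa [hammingDist_comm]⟩
  loopless := ⟨by intro x h; simp [hammingDist_self] at h⟩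

/-- The competition graph of a digraph `D`. -/
def competitionGraph {V : Type*} (D : V → V → Prop) : SimpleGraph V where
  Adj u v := u ≠ v ∧ ∃ x, D u x ∧ D v x
  symm := ⟨by rintro u v ⟨h, x, hu, hv⟩; exact ⟨h.symm, x, hv, hu⟩⟩
  loopless := ⟨by rintro u ⟨h, _⟩; exact h rfl⟩

/-- A digraph is acyclic iff it has no directed cycle. -/
def IsAcyclicDigraph {V : Type*} (D : V → V → Prop) : Prop :=
  ∀ v, ¬ Relation.TransGen D v v

/-- `G` together with `k` isolated vertices. -/
def addIsolated {V : Type*} (G : SimpleGraph V) (k : ℕ) : SimpleGraph (V ⊕ Fin k) where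
  Adj x y := ∃ u v, x = Sum.inl u ∧ y = Sum.inl v ∧ G.Adj u v
  symm := ⟨by rintro x y ⟨u, v, rfl, rfl, h⟩; exact ⟨v, u, rfl, rfl, h.symm⟩⟩
  loopless := ⟨by rintro x ⟨u, v, rfl, h, hadj⟩; injection h with h; subst h; exact hadj.ne rfl⟩

/-- The competition number of a graph. -/
noncomputable def competitionNumber {V : Type*} (G : SimpleGraph V) : ℕ :=
  sInf {k | ∃ D : (V ⊕ Fin k) → (V ⊕ Fin k) → Prop,
    IsAcyclicDigraph D ∧ competitionGraph D = addIsolated G k}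

/-- The maximal clique `S_j(p)` of `H(n,q)`: all tuples agreeing with `p` off coordinate `j`. -/
def Sset {n q : ℕ} (j : Fin n) (p : Fin n → Fin q) : Set (Fin n → Fin q) :=
  {x | ∀ i, i ≠ j → x i = p i}

/-- A maximal clique of a graph. -/
def IsMaxClique {V : Type*} (G : SimpleGraph V) (S : Set V) : Prop :=
  G.IsClique S ∧ ∀ T, G.IsClique T → S ⊆ T → S = T

/-- An edge clique cover. -/
def IsEdgeCliqueCover {V : Type*} (G : SimpleGraph V) (F : Finset (Finset V)) : Prop :=
  (∀ S ∈ F, G.IsClique (S : Set V)) ∧ ∀ u v, G.Adj u v → ∃ S ∈ F, u ∈ S ∧ v ∈ S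

/-- In-neighborhood of a vertex in a digraph. -/
def inNbhd {V : Type*} (D : V → V → Prop) (v : V) : Set V := {w | D w v}

namespace HamAux

variable {n q : ℕ}

def lineF (j : Fin n) (p : Fin n → Fin q) : Finset (Fin n → Fin q) :=
  Finset.univ.filter (fun x => ∀ i, i ≠ j → x i = p i)

lemma mem_lineF {j : Fin n} {p x : Fin n → Fin q} :
    x ∈ lineF j p ↔ ∀ i, i ≠ j → x i = p i := by simp [lineF]

lemma hammingDist_eq_one_of {j : Fin n} {x y : Fin n → Fin q}
    (h : ∀ i, i ≠ j → x i = y i) (hxy : x ≠ y) : hammingDist x y = 1 := by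
  have hj : x j ≠ y j := by
    intro hj
    apply hxy; funext i
    by_cases hi : i = j
    · subst hi; exact hj
    · exact h i hi
  have hset : ({i | x i ≠ y i} : Finset (Fin n)) = {j} := by
    ext i
    simp only [Finset.mem_filter, Finset.mem_univ, true_and, Finset.mem_singleton]
    constructor
    · intro hne; by_contra hij; exact hne (h i hij)
    · rintro rfl; exact hj
  rw [hammingDist, hset, Finset.card_singleton]

lemma exists_of_hammingDist_one {x y : Fin n → Fin q} (h : hammingDist x y = 1) :
    ∃ j, x j ≠ y j ∧ ∀ i, i ≠ j → x i = y i := by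
  rw [hammingDist, Finset.card_eq_one] at h
  obtain ⟨j, hj⟩ := h
  refine ⟨j, ?_, ?_⟩
  · have : j ∈ ({i | x i ≠ y i} : Finset (Fin n)) := hj ▸ Finset.mem_singleton_self j
    simpa using this
  · intro i hi
    by_contra hne
    have : i ∈ ({i | x i ≠ y i} : Finset (Fin n)) := by simpa using hne
    rw [hj, Finset.mem_singleton] at this
    exact hi this

lemma lineF_isClique (j : Fin n) (p : Fin n → Fin q) :
    (hammingGraph n q).IsClique (lineF j p : Set (Fin n → Fin q)) := by
  intro x hx y hy hxy
  simp only [Finset.coe_filter, Set.mem_setOf_eq, lineF, Finset.mem_coe, mem_lineF] at hx hy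
  exact hammingDist_eq_one_of (fun i hi => (hx.2 i hi).trans (hy.2 i hi).symm) hxy

lemma clique_subset_line {S : Set (Fin n → Fin q)} (hS : (hammingGraph n q).IsClique S)
    {u v : Fin n → Fin q} (hu : u ∈ S) (hv : v ∈ S) {j : Fin n}
    (hj : u j ≠ v j) (hoff : ∀ i, i ≠ j → u i = v i) :
    ∀ w ∈ S, ∀ i, i ≠ j → w i = u i := by
  intro w hw i hi
  by_cases hwu : w = u
  · subst hwu; rfl
  by_cases hwv : w = v
  · subst hwv; exact (hoff i hi).symm
  have h1 : hammingDist w u = 1 := hS hw hu hwu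
  have h2 : hammingDist w v = 1 := hS hw hv hwv
  obtain ⟨k, hk, hkoff⟩ := exists_of_hammingDist_one h1
  by_cases hkj : k = j
  · subst hkj; exact hkoff i hi
  · exfalso
    have hwj : w j = u j := hkoff j (fun h => hkj h.symm)
    have d1 : w j ≠ v j := hwj ▸ hj
    have d2 : w k ≠ v k := by rw [← hoff k hkj]; exact hk
    rw [hammingDist, Finset.card_eq_one] at h2
    obtain ⟨m, hm⟩ := h2
    have hjm : j = m := by
      have : j ∈ ({i | w i ≠ v i} : Finset (Fin n)) := by simpa using d1
      rwa [hm, Finset.mem_singleton] at this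
    have hkm : k = m := by
      have : k ∈ ({i | w i ≠ v i} : Finset (Fin n)) := by simpa using d2
      rwa [hm, Finset.mem_singleton] at this
    exact hkj (hkm.trans hjm.symm)

variable (n q) in
def lineIdx [NeZero q] : Type _ := (j : Fin n) × {p : Fin n → Fin q // p j = 0}

instance [NeZero q] : Fintype (lineIdx n q) := by unfold lineIdx; infer_instance

lemma card_lineIdx [NeZero q] : Fintype.card (lineIdx n q) = n * q ^ (n - 1) := by
  have h1 : ∀ j : Fin n, Fintype.card {p : Fin n → Fin q // p j = 0} = q ^ (n - 1) := by
    intro j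
    have e : {p : Fin n → Fin q // p j = 0} ≃ ({i : Fin n // i ≠ j} → Fin q) :=
      { toFun := fun p i => p.1 i.1
        invFun := fun f => ⟨fun i => if h : i = j then 0 else f ⟨i, h⟩, by simp⟩
        left_inv := by
          intro p
          ext i
          by_cases h : i = j
          · subst h; simp [p.2]
          · simp [h]
        right_inv := by
          intro f
          funext i
          simp [i.2] }
    have hcomp : Fintype.card {i : Fin n // i ≠ j} = n - 1 := by
      have h0 : Fintype.card {i : Fin n // i ≠ j} = Fintype.card {i : Fin n // ¬ (i = j)} := rfl
      rw [h0, Fintype.card_subtype_compl, Fintype.card_subtype_eq, Fintype.card_fin]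
    rw [Fintype.card_congr e, Fintype.card_fun, Fintype.card_fin, hcomp]
  show Fintype.card ((j : Fin n) × {p : Fin n → Fin q // p j = 0}) = _
  rw [Fintype.card_sigma]
  simp [h1, Finset.sum_const, Fintype.card_fin, mul_comm]

end HamAux

theorem hammingGraph_edge_clique_cover_number (n q : ℕ) (hn : 2 ≤ n) (hq : 2 ≤ q) :
    sInf {m | ∃ F : Finset (Finset (Fin n → Fin q)),
      IsEdgeCliqueCover (hammingGraph n q) F ∧ F.card = m} = n * q ^ (n - 1) := by
  haveI : NeZero q := ⟨by omega⟩
  set e1 : Fin q := ⟨1, by omega⟩ with he1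
  have h01 : (0 : Fin q) ≠ e1 := by
    intro h; exact absurd (congrArg Fin.val h) (by simp [he1])
  -- lower bound: every edge clique cover has at least N cliques
  have lower : ∀ F : Finset (Finset (Fin n → Fin q)),
      IsEdgeCliqueCover (hammingGraph n q) F → n * q ^ (n - 1) ≤ F.card := by
    intro F hF
    obtain ⟨hcl, hcov⟩ := hF
    have hedge : ∀ a : HamAux.lineIdx n q,
        ∃ S ∈ F, a.2.1 ∈ S ∧ Function.update a.2.1 a.1 e1 ∈ S := by
      intro a
      apply hcov
      show hammingDist _ _ = 1
      apply HamAux.hammingDist_eq_one_of (j := a.1)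
      · intro i hi; rw [Function.update_of_ne hi]
      · intro h
        have h2 := congrFun h a.1
        rw [Function.update_self, a.2.2] at h2
        exact h01 h2
    choose f hfF hfu hfv using hedge
    have hinj : Function.Injective f := by
      rintro ⟨ja, pa, hpa⟩ ⟨jb, pb, hpb⟩ hab
      have hSclique := hcl _ (hfF ⟨ja, ⟨pa, hpa⟩⟩)
      have hua := hfu ⟨ja, ⟨pa, hpa⟩⟩
      have hva := hfv ⟨ja, ⟨pa, hpa⟩⟩
      have hub : pb ∈ f ⟨ja, ⟨pa, hpa⟩⟩ := by rw [hab]; exact hfu ⟨jb, ⟨pb, hpb⟩⟩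
      have hvb : Function.update pb jb e1 ∈ f ⟨ja, ⟨pa, hpa⟩⟩ := by
        rw [hab]; exact hfv ⟨jb, ⟨pb, hpb⟩⟩
      have hja : pa ja ≠ Function.update pa ja e1 ja := by
        rw [Function.update_self, hpa]; exact h01
      have hoffa : ∀ i, i ≠ ja → pa i = Function.update pa ja e1 i := by
        intro i hi; rw [Function.update_of_ne hi]
      have hkey : ∀ w ∈ (f ⟨ja, ⟨pa, hpa⟩⟩ : Finset _), ∀ i, i ≠ ja → w i = pa i := by
        intro w hw
        exact HamAux.clique_subset_line hSclique hua hva hja hoffa w hw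
      have hjj : jb = ja := by
        by_contra hne
        have h1 := hkey _ hub jb hne
        have h2 := hkey _ hvb jb hne
        rw [← h2, Function.update_self] at h1
        rw [hpb] at h1
        exact h01 h1
      subst hjj
      have hpp : pb = pa := by
        funext i
        by_cases hi : i = jb
        · subst hi; rw [hpa, hpb]
        · exact hkey _ hub i hi
      subst hpp
      rfl
    calc n * q ^ (n - 1) = Fintype.card (HamAux.lineIdx n q) := HamAux.card_lineIdx.symm
      _ = (Finset.univ : Finset (HamAux.lineIdx n q)).card := Finset.card_univ.symm
      _ ≤ F.card := Finset.card_le_card_of_injOn f (fun a _ => hfF a) (hinj.injOn)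
  -- the canonical cover
  set F0 : Finset (Finset (Fin n → Fin q)) :=
    Finset.image (fun a : HamAux.lineIdx n q => HamAux.lineF a.1 a.2.1) Finset.univ with hF0
  have hcov0 : IsEdgeCliqueCover (hammingGraph n q) F0 := by
    constructor
    · intro S hS
      rw [hF0, Finset.mem_image] at hS
      obtain ⟨a, -, rfl⟩ := hS
      exact HamAux.lineF_isClique a.1 a.2.1
    · intro u v huv
      obtain ⟨j, hj, hoff⟩ := HamAux.exists_of_hammingDist_one huv
      refine ⟨HamAux.lineF j (Function.update u j 0), ?_, ?_, ?_⟩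
      · rw [hF0, Finset.mem_image]
        exact ⟨⟨j, ⟨Function.update u j 0, Function.update_self _ _ _⟩⟩,
          Finset.mem_univ _, rfl⟩
      · rw [HamAux.mem_lineF]
        intro i hi; rw [Function.update_of_ne hi]
      · rw [HamAux.mem_lineF]
        intro i hi; rw [Function.update_of_ne hi]; exact (hoff i hi).symm
  have hcard0 : F0.card = n * q ^ (n - 1) := by
    refine le_antisymm ?_ (lower F0 hcov0)
    calc F0.card ≤ (Finset.univ : Finset (HamAux.lineIdx n q)).card := Finset.card_image_le
      _ = n * q ^ (n - 1) := by rw [Finset.card_univ, HamAux.card_lineIdx]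
  have hmem : n * q ^ (n - 1) ∈ {m | ∃ F : Finset (Finset (Fin n → Fin q)),
      IsEdgeCliqueCover (hammingGraph n q) F ∧ F.card = m} := ⟨F0, hcov0, hcard0⟩
  refine le_antisymm (Nat.sInf_le hmem) (le_csInf ⟨_, hmem⟩ ?_)
  rintro m ⟨F, hF, rfl⟩
  exact lower F hF
end

section
/- Let G be a graph in which every edge is contained in exactly one maximal clique, let F be the family of all maximal cliques of G of size at least 2, and let k ≥ k(G) where k(G) is the competition number of G. Then there exists an acyclic digraph D such that: (a) the competition graph of D is G together with k isolated vertices; (b) for every vertex v of D, the in-neighborhood of v is either empty or a member of F; (c) the number of vertices of D with empty in-neighborhood equals k + |V(G)| − |F|. -/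
open SimpleGraph

lemma exists_maxClique_superset {V : Type*} [Fintype V] {G : SimpleGraph V}
    (C : Set V) (hC : G.IsClique C) : ∃ S, IsMaxClique G S ∧ C ⊆ S := by
  obtain ⟨S, hS, hmax⟩ := Set.exists_max_image {T | G.IsClique T ∧ C ⊆ T} Set.ncard
    (Set.toFinite _) ⟨C, hC, subset_rfl⟩
  refine ⟨S, ⟨hS.1, fun T hT hsub => ?_⟩, hS.2⟩
  exact Set.eq_of_subset_of_ncard_le hsub (hmax T ⟨hT, hS.2.trans hsub⟩) (Set.toFinite T)

theorem exists_nice_acyclic_digraph {V : Type*} [Fintype V] (G : SimpleGraph V)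
    (hG : ∀ u v, G.Adj u v → ∃! S, IsMaxClique G S ∧ u ∈ S ∧ v ∈ S)
    (k : ℕ) (hk : competitionNumber G ≤ k) :
    ∃ D : (V ⊕ Fin k) → (V ⊕ Fin k) → Prop,
      IsAcyclicDigraph D ∧
      competitionGraph D = addIsolated G k ∧
      (∀ v, inNbhd D v = ∅ ∨
        ∃ S : Set V, (IsMaxClique G S ∧ 2 ≤ S.ncard) ∧ inNbhd D v = Sum.inl '' S) ∧
      {v | inNbhd D v = ∅}.ncard =
        k + Fintype.card V - {S : Set V | IsMaxClique G S ∧ 2 ≤ S.ncard}.ncard := by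
  classical
  set F : Set (Set V) := {S : Set V | IsMaxClique G S ∧ 2 ≤ S.ncard} with hF
  -- every edge lies in a member of F which is its unique maximal clique
  have hedge : ∀ u v, G.Adj u v → ∃ S, S ∈ F ∧ u ∈ S ∧ v ∈ S ∧
      (∀ M, IsMaxClique G M → u ∈ M → v ∈ M → M = S) := by
    intro u v huv
    obtain ⟨S, ⟨hSmax, huS, hvS⟩, huniq⟩ := hG u v huv
    refine ⟨S, ⟨hSmax, ?_⟩, huS, hvS, fun M hM hu hv => huniq M ⟨hM, hu, hv⟩⟩
    calc (2 : ℕ) = ({u, v} : Set V).ncard := (Set.ncard_pair huv.ne).symm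
      _ ≤ S.ncard := Set.ncard_le_ncard
          (Set.insert_subset huS (Set.singleton_subset_iff.2 hvS)) (Set.toFinite S)
  by_cases hFe : F = ∅
  · -- no edges at all
    have hnoadj : ∀ u v, ¬ G.Adj u v := by
      intro u v huv
      obtain ⟨S, hS, -⟩ := hedge u v huv
      rw [hFe] at hS; exact hS
    refine ⟨fun _ _ => False, ?_, ?_, ?_, ?_⟩
    · intro v hv
      cases hv with
      | single h => exact h
      | tail _ h => exact h
    · ext x y
      constructor
      · rintro ⟨_, _, h, _⟩; exact h.elim
      · rintro ⟨u, v, _, _, huv⟩; exact (hnoadj u v huv).elim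
    · intro v; left; rfl
    · have h1 : {v : V ⊕ Fin k | inNbhd (fun _ _ => False) v = ∅} = Set.univ := by
        ext v; simp only [Set.mem_setOf_eq, Set.mem_univ, iff_true]; rfl
      rw [h1, hFe]
      simp [Set.ncard_univ, Nat.card_sum, Nat.add_comm]
  · -- main case
    obtain ⟨S0, hS0⟩ := Set.nonempty_iff_ne_empty.2 hFe
    obtain ⟨v0, hv0⟩ : S0.Nonempty := by
      rcases S0.eq_empty_or_nonempty with h | h
      · exfalso; have := hS0.2; rw [h] at this; simp at this
      · exact h
    haveI : Nonempty (V ⊕ Fin k) := ⟨Sum.inl v0⟩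
    -- membership: the competition-number set is nonempty
    haveI : Fintype ↥F := (Set.toFinite F).fintype
    have hcardF : Fintype.card ↥F = F.ncard := by
      rw [← Nat.card_eq_fintype_card, Nat.card_coe_set_eq]
    set m := F.ncard with hm
    let e : ↥F ≃ Fin m := Fintype.equivFinOfCardEq hcardF
    let Dm : (V ⊕ Fin m) → (V ⊕ Fin m) → Prop := fun x y =>
      ∃ (a : V) (i : Fin m), x = Sum.inl a ∧ y = Sum.inr i ∧ a ∈ (↑(e.symm i) : Set V)
    have hacm : IsAcyclicDigraph Dm := by
      have step : ∀ x y, Relation.TransGen Dm x y → Dm x y := by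
        intro x y hxy
        induction hxy with
        | single h => exact h
        | tail hxb hbc ih =>
          obtain ⟨a, i, _, rfl, _⟩ := ih
          obtain ⟨a', i', hb, -, -⟩ := hbc
          exact absurd hb (by simp)
      intro v hv
      obtain ⟨a, i, rfl, h, -⟩ := step _ _ hv
      simp at h
    have hcm : competitionGraph Dm = addIsolated G m := by
      ext x y
      constructor
      · rintro ⟨hne, z, ⟨a, i, rfl, rfl, hai⟩, ⟨b, j, rfl, hz, hbj⟩⟩
        obtain rfl := Sum.inr_injective hz
        have hab : a ≠ b := fun h => hne (by rw [h])
        exact ⟨a, b, rfl, rfl, (e.symm _).2.1.1 hai hbj hab⟩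
      · rintro ⟨a, b, rfl, rfl, hab⟩
        obtain ⟨S, hS, haS, hbS, -⟩ := hedge a b hab
        refine ⟨by simp [hab.ne], Sum.inr (e ⟨S, hS⟩),
          ⟨a, e ⟨S, hS⟩, rfl, rfl, ?_⟩, ⟨b, e ⟨S, hS⟩, rfl, rfl, ?_⟩⟩ <;>
          · rw [Equiv.symm_apply_apply]; assumption
    have hne0 : {k' | ∃ D : (V ⊕ Fin k') → (V ⊕ Fin k') → Prop,
        IsAcyclicDigraph D ∧ competitionGraph D = addIsolated G k'}.Nonempty :=
      ⟨m, Dm, hacm, hcm⟩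
    obtain ⟨D₀, hac₀, hcg₀⟩ := Nat.sInf_mem hne0
    -- transfer D₀ to V ⊕ Fin k
    have hk' : sInf {k' | ∃ D : (V ⊕ Fin k') → (V ⊕ Fin k') → Prop,
        IsAcyclicDigraph D ∧ competitionGraph D = addIsolated G k'} ≤ k := hk
    let ι : (V ⊕ Fin (sInf {k' | ∃ D : (V ⊕ Fin k') → (V ⊕ Fin k') → Prop,
        IsAcyclicDigraph D ∧ competitionGraph D = addIsolated G k'})) → (V ⊕ Fin k) :=
      Sum.map id (Fin.castLE hk')
    have hι : Function.Injective ι := by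
      rintro (a | i) (b | j) hab <;> simp [ι] at hab <;> simp [hab]
    let D₁ : (V ⊕ Fin k) → (V ⊕ Fin k) → Prop := fun x y =>
      ∃ a b, D₀ a b ∧ ι a = x ∧ ι b = y
    have h1trans : ∀ x y, Relation.TransGen D₁ x y →
        ∃ a b, ι a = x ∧ ι b = y ∧ Relation.TransGen D₀ a b := by
      intro x y hxy
      induction hxy with
      | single h => obtain ⟨a, b, hab, ha, hb⟩ := h; exact ⟨a, b, ha, hb, .single hab⟩
      | tail _ hbc ih =>
        obtain ⟨a, b0, ha, hb0, ht⟩ := ih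
        obtain ⟨a', b', h', ha', hb'⟩ := hbc
        obtain rfl : a' = b0 := hι (ha'.trans hb0.symm)
        exact ⟨a, b', ha, hb', ht.tail h'⟩
    have h1ac : IsAcyclicDigraph D₁ := by
      intro v hv
      obtain ⟨a, b, ha, hb, ht⟩ := h1trans _ _ hv
      obtain rfl : a = b := hι (ha.trans hb.symm)
      exact hac₀ a ht
    -- rank function
    let h : (V ⊕ Fin k) → ℕ := fun x => Set.ncard {y | Relation.TransGen D₁ y x}
    have hmono : ∀ a b, D₁ a b → h a < h b := by
      intro a b hab
      apply Set.ncard_lt_ncard _ (Set.toFinite _)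
      have hsub : {y | Relation.TransGen D₁ y a} ⊆ {y | Relation.TransGen D₁ y b} :=
        fun y hy => hy.tail hab
      refine (Set.ssubset_iff_of_subset hsub).2 ⟨a, .single hab, fun hc => h1ac a hc⟩
    -- clique property of in-neighborhoods of D₁
    have hclq : ∀ x u v, u ≠ v → D₁ (Sum.inl u) x → D₁ (Sum.inl v) x → G.Adj u v := by
      intro x u v huv h1 h2
      obtain ⟨a, b, hab, ha, hb⟩ := h1
      obtain ⟨a', b', hab', ha', hb'⟩ := h2
      have hbb : b' = b := hι (hb'.trans hb.symm)
      have hau : a = Sum.inl u := by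
        rcases a with a | i
        · simpa [ι] using ha
        · simp [ι] at ha
      have hav : a' = Sum.inl v := by
        rcases a' with a' | i
        · simpa [ι] using ha'
        · simp [ι] at ha'
      subst hau hav
      have hadj : (competitionGraph D₀).Adj (Sum.inl u) (Sum.inl v) :=
        ⟨by simp [huv], b, hab, hbb ▸ hab'⟩
      rw [hcg₀] at hadj
      obtain ⟨u', v', hu', hv', hGadj⟩ := hadj
      obtain rfl : u' = u := by injection hu'.symm
      obtain rfl : v' = v := by injection hv'.symm
      exact hGadj
    -- prey existence for every edge
    have hprey : ∀ u v, G.Adj u v → ∃ x, D₁ (Sum.inl u) x ∧ D₁ (Sum.inl v) x := by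
      intro u v huv
      have hadj : (competitionGraph D₀).Adj (Sum.inl u) (Sum.inl v) := by
        rw [hcg₀]; exact ⟨u, v, rfl, rfl, huv⟩
      obtain ⟨-, z, h1, h2⟩ := hadj
      exact ⟨ι z, ⟨Sum.inl u, z, h1, rfl, rfl⟩, ⟨Sum.inl v, z, h2, rfl, rfl⟩⟩
    -- choose a good prey for each maximal clique
    have key : ∀ S : Set V, ∃ x : V ⊕ Fin k, S ∈ F →
        (∀ c ∈ S, h (Sum.inl c) < h x) ∧
        ∃ a b, a ∈ S ∧ b ∈ S ∧ G.Adj a b ∧ D₁ (Sum.inl a) x ∧ D₁ (Sum.inl b) x := by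
      intro S
      by_cases hS : S ∈ F
      · have h1lt : 1 < S.ncard := lt_of_lt_of_le one_lt_two hS.2
        set P : Set (V ⊕ Fin k) := {x | ∃ a b, a ∈ S ∧ b ∈ S ∧ G.Adj a b ∧
          D₁ (Sum.inl a) x ∧ D₁ (Sum.inl b) x} with hP
        have hPne : P.Nonempty := by
          obtain ⟨a, b, ha, hb, hab⟩ := (Set.one_lt_ncard_iff (Set.toFinite S)).1 h1lt
          have hadj : G.Adj a b := hS.1.1 ha hb hab
          obtain ⟨x, hx1, hx2⟩ := hprey a b hadj
          exact ⟨x, a, b, ha, hb, hadj, hx1, hx2⟩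
        obtain ⟨x, hxP, hxmax⟩ := Set.exists_max_image P h (Set.toFinite P) hPne
        refine ⟨x, fun _ => ⟨?_, hxP⟩⟩
        intro c hc
        obtain ⟨d, hd, hdc⟩ := Set.exists_ne_of_one_lt_ncard h1lt c
        have hadj : G.Adj c d := hS.1.1 hc hd (Ne.symm hdc)
        obtain ⟨x', hx'c, hx'd⟩ := hprey c d hadj
        exact lt_of_lt_of_le (hmono _ _ hx'c) (hxmax x' ⟨c, d, hc, hd, hadj, hx'c, hx'd⟩)
      · exact ⟨Classical.arbitrary _, fun hS' => absurd hS' hS⟩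
    choose f hf using key
    -- injectivity of f on F
    have hinj : ∀ S ∈ F, ∀ S' ∈ F, f S = f S' → S = S' := by
      intro S hS S' hS' hfe
      obtain ⟨-, a, b, haS, hbS, hab, hax, hbx⟩ := hf S hS
      obtain ⟨-, a', b', ha', hb', hab', hax', hbx'⟩ := hf S' hS'
      rw [← hfe] at hax' hbx'
      set N : Set V := {c | D₁ (Sum.inl c) (f S)} with hN
      have hNclq : G.IsClique N := fun c hc d hd hcd => hclq _ c d hcd hc hd
      obtain ⟨M, hM, hNM⟩ := exists_maxClique_superset N hNclq
      obtain ⟨T, hT, haT, hbT, huniqT⟩ := hedge a b hab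
      obtain ⟨T', hT', haT', hbT', huniqT'⟩ := hedge a' b' hab'
      have hST : S = T := huniqT S hS.1 haS hbS
      have hMT : M = T := huniqT M hM (hNM hax) (hNM hbx)
      have hST' : S' = T' := huniqT' S' hS'.1 ha' hb'
      have hMT' : M = T' := huniqT' M hM (hNM hax') (hNM hbx')
      rw [hST, hST', ← hMT, ← hMT']
    -- the digraph
    let D : (V ⊕ Fin k) → (V ⊕ Fin k) → Prop := fun w v =>
      ∃ S, S ∈ F ∧ v = f S ∧ w ∈ Sum.inl '' S
    have hinN : ∀ S ∈ F, inNbhd D (f S) = Sum.inl '' S := by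
      intro S hS
      ext w
      simp only [inNbhd, Set.mem_setOf_eq]
      constructor
      · rintro ⟨S', hS', hfe, hw⟩
        rwa [← hinj S hS S' hS' hfe] at hw
      · intro hw; exact ⟨S, hS, rfl, hw⟩
    have hinN0 : ∀ v, (¬ ∃ S, S ∈ F ∧ v = f S) → inNbhd D v = ∅ := by
      intro v hv
      ext w
      simp only [inNbhd, Set.mem_setOf_eq, Set.mem_empty_iff_false, iff_false]
      rintro ⟨S, hS, hfe, -⟩
      exact hv ⟨S, hS, hfe⟩
    have hDlt : ∀ w v, D w v → h w < h v := by
      rintro w v ⟨S, hS, rfl, c, hcS, rfl⟩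
      exact (hf S hS).1 c hcS
    refine ⟨D, ?_, ?_, ?_, ?_⟩
    · -- acyclic
      have htg : ∀ x y, Relation.TransGen D x y → h x < h y := by
        intro x y hxy
        induction hxy with
        | single hd => exact hDlt _ _ hd
        | tail _ hbc ih => exact ih.trans (hDlt _ _ hbc)
      exact fun v hv => lt_irrefl _ (htg v v hv)
    · -- competition graph
      ext x y
      constructor
      · rintro ⟨hne, z, ⟨S, hS, hz1, a, haS, rfl⟩, ⟨S', hS', hz2, b, hbS, rfl⟩⟩
        obtain rfl : S = S' := hinj S hS S' hS' (hz1.symm.trans hz2)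
        have hab : a ≠ b := fun hh => hne (by rw [hh])
        exact ⟨a, b, rfl, rfl, hS.1.1 haS hbS hab⟩
      · rintro ⟨a, b, rfl, rfl, hab⟩
        obtain ⟨S, hS, haS, hbS, -⟩ := hedge a b hab
        exact ⟨by simp [hab.ne], f S, ⟨S, hS, rfl, a, haS, rfl⟩, ⟨S, hS, rfl, b, hbS, rfl⟩⟩
    · -- in-neighborhoods
      intro v
      by_cases hv : ∃ S, S ∈ F ∧ v = f S
      · obtain ⟨S, hS, rfl⟩ := hv
        exact Or.inr ⟨S, hS, hinN S hS⟩
      · exact Or.inl (hinN0 v hv)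
    · -- counting
      have hTc : {v | inNbhd D v = ∅} = (f '' F)ᶜ := by
        ext v
        simp only [Set.mem_setOf_eq, Set.mem_compl_iff, Set.mem_image]
        constructor
        · rintro hv ⟨S, hS, hfe⟩
          have := hinN S hS
          rw [hfe] at this
          rw [this] at hv
          obtain ⟨c, hc⟩ : S.Nonempty := by
            rcases S.eq_empty_or_nonempty with hh | hh
            · exfalso; have := hS.2; rw [hh] at this; simp at this
            · exact hh
          exact absurd hv (by
            intro hemp
            have : Sum.inl c ∈ (∅ : Set (V ⊕ Fin k)) := hemp ▸ ⟨c, hc, rfl⟩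
            exact this)
        · intro hv
          exact hinN0 v (fun ⟨S, hS, hfe⟩ => hv ⟨S, hS, hfe.symm⟩)
      rw [hTc]
      have himg : (f '' F).ncard = F.ncard :=
        Set.ncard_image_of_injOn (fun S hS S' hS' => hinj S hS S' hS')
      have hsum := Set.ncard_add_ncard_compl (f '' F) (Set.toFinite _) (Set.toFinite _)
      have hcardW : Nat.card (V ⊕ Fin k) = Fintype.card V + k := by
        simp [Nat.card_eq_fintype_card]
      omega
end

section
/- For every q ≥ 2, the competition number of the Hamming graph H(2,q) equals 2. -/
open SimpleGraph

lemma hd_two {q : ℕ} (x y : Fin 2 → Fin q) :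
    hammingDist x y = (if x 0 = y 0 then 0 else 1) + (if x 1 = y 1 then 0 else 1) := by
  rw [hammingDist, Finset.card_filter, Fin.sum_univ_two]
  simp [ite_not]

lemma funext_two {q : ℕ} {x y : Fin 2 → Fin q} (h0 : x 0 = y 0) (h1 : x 1 = y 1) : x = y := by
  funext i; fin_cases i <;> assumption

lemma adj_iff {q : ℕ} (x y : Fin 2 → Fin q) :
    (hammingGraph 2 q).Adj x y ↔ ((x 0 = y 0 ∧ x 1 ≠ y 1) ∨ (x 0 ≠ y 0 ∧ x 1 = y 1)) := by
  show hammingDist x y = 1 ↔ _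
  rw [hd_two]
  split_ifs with h1 h2 <;> simp_all

def myD (q : ℕ) : ((Fin 2 → Fin q) ⊕ Fin 2) → ((Fin 2 → Fin q) ⊕ Fin 2) → Prop :=
  fun u v => ∃ x : Fin 2 → Fin q, u = Sum.inl x ∧
    ((v = Sum.inr 0 ∧ (x 0 : ℕ) = 0) ∨
     (v = Sum.inr 1 ∧ (x 1 : ℕ) = 0) ∨
     (∃ y : Fin 2 → Fin q, v = Sum.inl y ∧
       (((y 0 : ℕ) + 1 = (x 0 : ℕ) ∧ (y 1 : ℕ) + 1 = q) ∨
        ((y 0 : ℕ) = 0 ∧ (y 1 : ℕ) + 1 = (x 1 : ℕ)))))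

lemma myD_acyclic (q : ℕ) : IsAcyclicDigraph (myD q) := by
  set f : ((Fin 2 → Fin q) ⊕ Fin 2) → ℕ := fun u => match u with
    | Sum.inr i => (i : ℕ)
    | Sum.inl x => 2 + (x 0 : ℕ) * q + (x 1 : ℕ) with hfdef
  have hf : ∀ u v, myD q u v → f v < f u := by
    rintro u v ⟨x, rfl, h⟩
    rcases h with ⟨rfl, h0⟩ | ⟨rfl, h0⟩ | ⟨y, rfl, h⟩
    · simp [f]
    · simp only [f]; omega
    · rcases h with ⟨h1, h2⟩ | ⟨h1, h2⟩
      · show 2 + (y 0 : ℕ) * q + (y 1 : ℕ) < 2 + (x 0 : ℕ) * q + (x 1 : ℕ)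
        have e : (x 0 : ℕ) * q = (y 0 : ℕ) * q + q := by rw [← h1]; ring
        omega
      · show 2 + (y 0 : ℕ) * q + (y 1 : ℕ) < 2 + (x 0 : ℕ) * q + (x 1 : ℕ)
        have e : (y 0 : ℕ) * q = 0 := by rw [h1]; ring
        omega
  intro v hv
  have key : ∀ a b, Relation.TransGen (myD q) a b → f b < f a := by
    intro a b h
    induction h with
    | single h => exact hf _ _ h
    | tail _ h ih => exact (hf _ _ h).trans ih
  exact absurd (key v v hv) (lt_irrefl _)

lemma myD_comp {q : ℕ} (hq : 2 ≤ q) :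
    competitionGraph (myD q) = addIsolated (hammingGraph 2 q) 2 := by
  ext u v
  show (u ≠ v ∧ ∃ p, myD q u p ∧ myD q v p) ↔ _
  constructor
  · rintro ⟨huv, p, ⟨x, rfl, hx⟩, ⟨x', rfl, hx'⟩⟩
    refine ⟨x, x', rfl, rfl, ?_⟩
    have hne : x ≠ x' := fun h => huv (by rw [h])
    have key : (x 0 : ℕ) = (x' 0 : ℕ) ∨ (x 1 : ℕ) = (x' 1 : ℕ) := by
      have hlt := (x 1).isLt
      have hlt' := (x' 1).isLt
      rcases hx with ⟨rfl, h0⟩ | ⟨h, h0⟩ | ⟨y, rfl, h0⟩ <;>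
        rcases hx' with ⟨h', h0'⟩ | ⟨h', h0'⟩ | ⟨y', h', h0'⟩ <;>
        simp_all <;> omega
    rw [adj_iff]
    have hne' : ¬((x 0 : ℕ) = (x' 0 : ℕ) ∧ (x 1 : ℕ) = (x' 1 : ℕ)) := by
      rintro ⟨a, b⟩
      exact hne (funext_two (Fin.val_injective a) (Fin.val_injective b))
    rcases key with h | h
    · exact Or.inl ⟨Fin.val_injective h, fun hc => hne' ⟨h, congrArg Fin.val hc⟩⟩
    · exact Or.inr ⟨fun hc => hne' ⟨congrArg Fin.val hc, h⟩, Fin.val_injective h⟩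
  · rintro ⟨x, x', rfl, rfl, hadj⟩
    rw [adj_iff] at hadj
    have hne : x ≠ x' := by
      rcases hadj with ⟨h0, h1⟩ | ⟨h0, h1⟩
      · exact fun h => h1 (congrFun h 1)
      · exact fun h => h0 (congrFun h 0)
    refine ⟨fun h => hne (Sum.inl.inj h), ?_⟩
    rcases hadj with ⟨h0, h1⟩ | ⟨h0, h1⟩
    · by_cases hz : (x 0 : ℕ) = 0
      · exact ⟨Sum.inr 0, ⟨x, rfl, Or.inl ⟨rfl, hz⟩⟩,
          ⟨x', rfl, Or.inl ⟨rfl, by rw [← h0]; exact hz⟩⟩⟩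
      · have hlt := (x 0).isLt
        refine ⟨Sum.inl ![⟨(x 0 : ℕ) - 1, by omega⟩, ⟨q - 1, by omega⟩], ?_, ?_⟩
        · exact ⟨x, rfl, Or.inr (Or.inr ⟨_, rfl, Or.inl ⟨by simp; omega, by simp; omega⟩⟩)⟩
        · refine ⟨x', rfl, Or.inr (Or.inr ⟨_, rfl, Or.inl ⟨?_, by simp; omega⟩⟩)⟩
          simp; rw [← h0]; omega
    · by_cases hz : (x 1 : ℕ) = 0
      · exact ⟨Sum.inr 1, ⟨x, rfl, Or.inr (Or.inl ⟨rfl, hz⟩)⟩,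
          ⟨x', rfl, Or.inr (Or.inl ⟨rfl, by rw [← h1]; exact hz⟩)⟩⟩
      · have hlt := (x 1).isLt
        refine ⟨Sum.inl ![⟨0, by omega⟩, ⟨(x 1 : ℕ) - 1, by omega⟩], ?_, ?_⟩
        · exact ⟨x, rfl, Or.inr (Or.inr ⟨_, rfl, Or.inr ⟨by simp, by simp; omega⟩⟩)⟩
        · refine ⟨x', rfl, Or.inr (Or.inr ⟨_, rfl, Or.inr ⟨by simp, ?_⟩⟩)⟩
          simp; rw [← h1]; omega


lemma flip_lemma {q : ℕ} (hq : 2 ≤ q) (a : Fin q) :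
    ∃ b : Fin q, b ≠ a := by
  refine ⟨if (a : ℕ) = 0 then ⟨1, by omega⟩ else ⟨0, by omega⟩, ?_⟩
  split_ifs with h <;> intro hc <;> rw [Fin.ext_iff] at hc <;> simp_all

lemma no_small {q : ℕ} (hq : 2 ≤ q) (k : ℕ) (hk : k ≤ 1)
    (D : ((Fin 2 → Fin q) ⊕ Fin k) → ((Fin 2 → Fin q) ⊕ Fin k) → Prop)
    (hD : IsAcyclicDigraph D)
    (hc : competitionGraph D = addIsolated (hammingGraph 2 q) k) : False := by
  have hq0 : 0 < q := by omega
  -- well-foundedness of the reversed digraph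
  have hwf : WellFounded (Function.swap D) := by
    haveI : IsIrrefl _ (Relation.TransGen (Function.swap D)) :=
      ⟨fun a h => hD a ((Relation.transGen_swap (r := D)).mp h)⟩
    exact Subrelation.wf (fun h => Relation.TransGen.single h)
      (Finite.wellFounded_of_trans_of_irrefl _)
  -- adjacency transfer
  have hAdj : ∀ u v, (u ≠ v ∧ ∃ p, D u p ∧ D v p) ↔ (addIsolated (hammingGraph 2 q) k).Adj u v := by
    intro u v
    rw [← hc]; rfl
  -- a grid vertex is never a sink
  have hNoSinkGrid : ∀ x : Fin 2 → Fin q, ∃ w, D (Sum.inl x) w := by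
    intro x
    obtain ⟨b, hb⟩ := flip_lemma hq (x 1)
    have hadj : (hammingGraph 2 q).Adj x (Function.update x 1 b) := by
      rw [adj_iff]
      exact Or.inl ⟨(Function.update_of_ne (by decide) _ _).symm,
        by rw [Function.update_self]; exact fun h => hb h.symm⟩
    have : (addIsolated (hammingGraph 2 q) k).Adj (Sum.inl x) (Sum.inl (Function.update x 1 b)) :=
      ⟨_, _, rfl, rfl, hadj⟩
    obtain ⟨-, p, hp, -⟩ := (hAdj _ _).mpr this
    exact ⟨p, hp⟩
  -- minimal vertex v1
  obtain ⟨v1, -, h1⟩ := hwf.has_min Set.univ ⟨Sum.inl (fun _ => ⟨0, hq0⟩), trivial⟩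
  have h1' : ∀ w, ¬ D v1 w := fun w hw => h1 w trivial hw
  obtain ⟨i, rfl⟩ : ∃ i, v1 = Sum.inr i := by
    cases v1 with
    | inl x => exact absurd (hNoSinkGrid x) (by simpa using fun w => h1' w)
    | inr i => exact ⟨i, rfl⟩
  -- second minimal vertex v2
  obtain ⟨v2, hv2, h2⟩ := hwf.has_min {Sum.inr i}ᶜ
    ⟨Sum.inl (fun _ => ⟨0, hq0⟩), by simp⟩
  have h2' : ∀ w, D v2 w → w = Sum.inr i := by
    intro w hw
    by_contra hne
    exact h2 w hne hw
  obtain ⟨x, rfl⟩ : ∃ x, v2 = Sum.inl x := by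
    cases v2 with
    | inl x => exact ⟨x, rfl⟩
    | inr j =>
      exfalso; apply hv2
      have : (j : ℕ) = (i : ℕ) := by have := j.isLt; have := i.isLt; omega
      rw [Fin.ext_iff.mpr this]
      exact Set.mem_singleton _
  -- two non-adjacent neighbors of x
  obtain ⟨b, hb⟩ := flip_lemma hq (x 1)
  obtain ⟨c, hcne⟩ := flip_lemma hq (x 0)
  set y := Function.update x 1 b with hy
  set z := Function.update x 0 c with hz
  have hy0 : y 0 = x 0 := Function.update_of_ne (by decide) _ _
  have hy1 : y 1 = b := Function.update_self _ _ _
  have hz0 : z 0 = c := Function.update_self _ _ _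
  have hz1 : z 1 = x 1 := Function.update_of_ne (by decide) _ _
  have hxy : (hammingGraph 2 q).Adj x y := by
    rw [adj_iff]; exact Or.inl ⟨hy0.symm, by rw [hy1]; exact fun h => hb h.symm⟩
  have hxz : (hammingGraph 2 q).Adj x z := by
    rw [adj_iff]; exact Or.inr ⟨by rw [hz0]; exact fun h => hcne h.symm, hz1.symm⟩
  have hy' : D (Sum.inl y) (Sum.inr i) := by
    obtain ⟨-, p, hp1, hp2⟩ := (hAdj _ _).mpr ⟨x, y, rfl, rfl, hxy⟩
    rwa [h2' p hp1] at hp2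
  have hz' : D (Sum.inl z) (Sum.inr i) := by
    obtain ⟨-, p, hp1, hp2⟩ := (hAdj _ _).mpr ⟨x, z, rfl, rfl, hxz⟩
    rwa [h2' p hp1] at hp2
  have hyz : y ≠ z := by
    intro h
    apply hcne
    rw [← hz0, ← h, hy0]
  have : (addIsolated (hammingGraph 2 q) k).Adj (Sum.inl y) (Sum.inl z) :=
    (hAdj _ _).mp ⟨fun h => hyz (Sum.inl.inj h), Sum.inr i, hy', hz'⟩
  obtain ⟨y', z', hy'', hz'', hadj⟩ := this
  rw [Sum.inl.injEq] at hy'' hz''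
  subst hy''; subst hz''
  rw [adj_iff] at hadj
  rcases hadj with ⟨e, -⟩ | ⟨-, e⟩
  · rw [hy0, hz0] at e; exact hcne e.symm
  · rw [hy1, hz1] at e; exact hb e

theorem competitionNumber_H2q (q : ℕ) (hq : 2 ≤ q) :
    competitionNumber (hammingGraph 2 q) = 2 := by
  have hmem : 2 ∈ {k | ∃ D : ((Fin 2 → Fin q) ⊕ Fin k) → ((Fin 2 → Fin q) ⊕ Fin k) → Prop,
      IsAcyclicDigraph D ∧ competitionGraph D = addIsolated (hammingGraph 2 q) k} :=
    ⟨myD q, myD_acyclic q, myD_comp hq⟩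
  refine le_antisymm (Nat.sInf_le hmem) (le_csInf ⟨2, hmem⟩ ?_)
  intro k hk
  by_contra h
  push_neg at h
  obtain ⟨D, hD, hcc⟩ := hk
  exact no_small hq k (by omega) D hD hcc
end

section
/- For every n ≥ 3, the competition number of the ternary Hamming graph H(n,3) is at most (n−3)·3^{n−1} + 6. -/
open SimpleGraph

/-! ### Auxiliary machinery for the upper bound -/

abbrev HLine (n : ℕ) : Type := {jp : Fin n × (Fin n → Fin 3) // jp.2 jp.1 = 0}

def HLine.mem {n : ℕ} (ℓ : HLine n) (c : Fin 3) : Fin n → Fin 3 :=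
  Function.update ℓ.1.2 ℓ.1.1 c


def subtypeZeroEquiv (n : ℕ) (j : Fin n) :
    {p : Fin n → Fin 3 // p j = 0} ≃ ({i : Fin n // i ≠ j} → Fin 3) where
  toFun p i := p.1 i.1
  invFun g := ⟨fun i => if h : i = j then 0 else g ⟨i, h⟩, by simp⟩
  left_inv := by
    rintro ⟨p, hp⟩
    apply Subtype.ext
    funext i
    by_cases h : i = j
    · subst h; simpa using hp.symm
    · simp [h]
  right_inv := by
    intro g
    funext i
    simp [i.2]

lemma card_hline (n : ℕ) : Fintype.card (HLine n) = n * 3 ^ (n - 1) := by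
  have e : HLine n ≃ Σ j : Fin n, {p : Fin n → Fin 3 // p j = 0} :=
    Equiv.subtypeProdEquivSigmaSubtype (p := fun (j : Fin n) (p : Fin n → Fin 3) => p j = 0)
  rw [Fintype.card_congr e, Fintype.card_sigma]
  have hcard : ∀ j : Fin n, Fintype.card {p : Fin n → Fin 3 // p j = 0} = 3 ^ (n - 1) := by
    intro j
    rw [Fintype.card_congr (subtypeZeroEquiv n j), Fintype.card_fun]
    have h1 : Fintype.card {i : Fin n // i ≠ j} = n - 1 := by
      have := Fintype.card_subtype_compl (fun i : Fin n => i = j)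
      simpa using this
    simp [h1]
  simp [hcard, Finset.sum_const, mul_comm]



def lift {n : ℕ} (c : Fin 3) (ℓ : HLine n) : HLine (n+1) :=
  ⟨(ℓ.1.1.succ, Fin.cons c ℓ.1.2), by simpa [Fin.cons_succ] using ℓ.2⟩

def vert {n : ℕ} (x : Fin n → Fin 3) : HLine (n+1) :=
  ⟨(0, Fin.cons 0 x), by simp⟩

lemma lift_inj {n : ℕ} (c : Fin 3) : Function.Injective (lift (n := n) c) := by
  intro ℓ ℓ' h
  have h1 := congrArg (fun z => z.1.1) h
  have h2 := congrArg (fun z => z.1.2) h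
  simp only [lift] at h1 h2
  exact Subtype.ext (Prod.ext (Fin.succ_injective _ h1) (Fin.cons_right_injective (α := fun _ : Fin (n+1) => Fin 3) c h2))

lemma lift_ne_lift {n : ℕ} {c c' : Fin 3} (h : c ≠ c') (ℓ ℓ' : HLine n) :
    lift c ℓ ≠ lift c' ℓ' := by
  intro he
  have h2 := congrArg (fun z => z.1.2 0) he
  simp only [lift, Fin.cons_zero] at h2
  exact h h2

lemma vert_ne_lift {n : ℕ} (x : Fin n → Fin 3) (c : Fin 3) (ℓ : HLine n) :
    vert x ≠ lift c ℓ := by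
  intro he
  have h1 := congrArg (fun z => z.1.1) he
  simp only [vert, lift] at h1
  exact (Fin.succ_ne_zero _) h1.symm

lemma vert_inj {n : ℕ} : Function.Injective (vert (n := n)) := by
  intro x y h
  have h2 := congrArg (fun z => z.1.2) h
  simp only [vert] at h2
  exact Fin.cons_right_injective (α := fun _ : Fin (n+1) => Fin 3) _ h2

lemma mem_lift {n : ℕ} (c : Fin 3) (ℓ : HLine n) (d : Fin 3) :
    (lift c ℓ).mem d = Fin.cons c (ℓ.mem d) := by
  funext i
  refine Fin.cases ?_ ?_ i
  · rw [show ((lift c ℓ).mem d) 0 = c from ?_]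
    · simp
    · simp only [HLine.mem, lift]
      rw [Function.update_of_ne (Fin.succ_ne_zero _).symm]
      simp
  · intro k
    simp only [HLine.mem, lift, Fin.cons_succ]
    by_cases hk : k = ℓ.1.1
    · subst hk; simp
    · rw [Function.update_of_ne (fun hh => hk (Fin.succ_injective _ hh)),
        Function.update_of_ne hk, Fin.cons_succ]

lemma mem_vert {n : ℕ} (x : Fin n → Fin 3) (d : Fin 3) :
    (vert x).mem d = Fin.cons d x := by
  funext i
  refine Fin.cases ?_ ?_ i
  · simp [HLine.mem, vert]
  · intro k
    simp only [HLine.mem, vert]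
    rw [Function.update_of_ne (Fin.succ_ne_zero _), Fin.cons_succ, Fin.cons_succ]

lemma eq_of_parts {n : ℕ} {u v : Fin (n+1) → Fin 3} (h0 : u 0 = v 0)
    (ht : Fin.tail u = Fin.tail v) : u = v := by
  rw [← Fin.cons_self_tail u, ← Fin.cons_self_tail v, h0, ht]

lemma fin3cases (c : Fin 3) : c = 0 ∨ c = 1 ∨ c = 2 := by revert c; decide

lemma vert_decomp {n : ℕ} (ℓ : HLine (n+1)) (h : ℓ.1.1 = 0) :
    ℓ = vert (Fin.tail ℓ.1.2) := by
  apply Subtype.ext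
  apply Prod.ext
  · simp [vert, h]
  · show ℓ.1.2 = Fin.cons 0 (Fin.tail ℓ.1.2)
    have : ℓ.1.2 0 = 0 := by rw [← h]; exact ℓ.2
    rw [← Fin.cons_self_tail ℓ.1.2, this]
    simp [Fin.tail_cons]

lemma lift_decomp {n : ℕ} (ℓ : HLine (n+1)) (j : Fin n) (h : ℓ.1.1 = j.succ) :
    ℓ = lift (ℓ.1.2 0) ⟨(j, Fin.tail ℓ.1.2), by
      show Fin.tail ℓ.1.2 j = 0
      have := ℓ.2
      rw [h] at this
      simpa [Fin.tail] using this⟩ := by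
  apply Subtype.ext
  apply Prod.ext
  · simp [lift, h]
  · show ℓ.1.2 = Fin.cons (ℓ.1.2 0) (Fin.tail ℓ.1.2)
    rw [Fin.cons_self_tail]



-- two distinct members of a line are adjacent
lemma hline_adj {n : ℕ} (ℓ : HLine n) {c c' : Fin 3} (h : c ≠ c') :
    (hammingGraph n 3).Adj (ℓ.mem c) (ℓ.mem c') := by
  show hammingDist _ _ = 1
  show (Finset.univ.filter fun i => ℓ.mem c i ≠ ℓ.mem c' i).card = 1
  have : (Finset.univ.filter fun i => ℓ.mem c i ≠ ℓ.mem c' i) = {ℓ.1.1} := by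
    ext i
    simp only [Finset.mem_filter, Finset.mem_univ, true_and, Finset.mem_singleton]
    constructor
    · intro hne
      by_contra hij
      exact hne (by simp [HLine.mem, Function.update_of_ne hij])
    · intro hij
      subst hij
      simp [HLine.mem, h]
  rw [this, Finset.card_singleton]

-- from an edge, extract the line through it
lemma edge_line {n : ℕ} {u v : Fin n → Fin 3} (h : (hammingGraph n 3).Adj u v) :
    ∃ ℓ : HLine n, u = ℓ.mem (u ℓ.1.1) ∧ v = ℓ.mem (v ℓ.1.1) := by
  have h1 : (Finset.univ.filter fun i => u i ≠ v i).card = 1 := h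
  obtain ⟨j, hj⟩ := Finset.card_eq_one.mp h1
  have hmem : ∀ i, u i ≠ v i ↔ i = j := by
    intro i
    constructor
    · intro hi
      have : i ∈ Finset.univ.filter fun i => u i ≠ v i := by simp [hi]
      rwa [hj, Finset.mem_singleton] at this
    · intro hij
      rw [hij]
      have hjj : j ∈ ({j} : Finset (Fin n)) := Finset.mem_singleton_self j
      rw [← hj, Finset.mem_filter] at hjj
      exact hjj.2
  refine ⟨⟨(j, Function.update u j 0), by simp⟩, ?_, ?_⟩
  · funext i
    by_cases hij : i = j
    · subst hij; simp [HLine.mem]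
    · simp [HLine.mem, Function.update_of_ne hij]
  · funext i
    by_cases hij : i = j
    · subst hij; simp [HLine.mem]
    · have : u i = v i := by
        by_contra hne
        exact hij ((hmem i).mp hne)
      simp [HLine.mem, Function.update_of_ne hij, ← this]

/-- The inductive data: a vertex ordering and a prey assignment realizing
    the Hamming graph as a competition graph with few isolated vertices. -/
structure Scheme (n : ℕ) where
  rank : (Fin n → Fin 3) → ℕ
  unrank : ℕ → (Fin n → Fin 3)
  A : (Fin n → Fin 3) → Option (HLine n)
  left : List (HLine n)
  rank_lt : ∀ v, rank v < 3 ^ n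
  unrank_rank : ∀ v, unrank (rank v) = v
  rank_unrank : ∀ i, i < 3 ^ n → rank (unrank i) = i
  A_rank : ∀ v ℓ, A v = some ℓ → ∀ c, rank (ℓ.mem c) < rank v
  A_inj : ∀ u v ℓ, A u = some ℓ → A v = some ℓ → u = v
  left_nodup : left.Nodup
  left_unused : ∀ ℓ ∈ left, ∀ v, A v ≠ some ℓ
  cover : ∀ ℓ : HLine n, (∃ v, A v = some ℓ) ∨ ℓ ∈ left
  hexc : (Finset.univ.filter fun v => A v = none).card ≤ 6
  hlen_lb : (Finset.univ.filter fun v => A v = none).card ≤ left.length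
  hlen_ub : left.length ≤ (n - 3) * 3 ^ (n - 1) +
      (Finset.univ.filter fun v => A v = none).card

theorem scheme_bound (n : ℕ) (S : Scheme n) :
    competitionNumber (hammingGraph n 3) ≤ (n - 3) * 3 ^ (n - 1) + 6 := by
  set K := (n - 3) * 3 ^ (n - 1) + 6 with hK
  have hlen : S.left.length ≤ K := S.hlen_ub.trans (Nat.add_le_add_left S.hexc _)
  -- the digraph
  set D : ((Fin n → Fin 3) ⊕ Fin K) → ((Fin n → Fin 3) ⊕ Fin K) → Prop :=
    fun a b => ∃ u c, a = Sum.inl u ∧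
      ((∃ v ℓ, b = Sum.inl v ∧ S.A v = some ℓ ∧ u = ℓ.mem c) ∨
       (∃ (i : Fin K) (h : (i : ℕ) < S.left.length),
          b = Sum.inr i ∧ u = (S.left.get ⟨i, h⟩).mem c)) with hD
  have hmono : ∀ a b, D a b → (fun x => Sum.elim S.rank (fun _ => 3 ^ n) x) a <
      (fun x => Sum.elim S.rank (fun _ => 3 ^ n) x) b := by
    rintro a b ⟨u, c, rfl, hcase⟩
    rcases hcase with ⟨v, ℓ, rfl, hA, rfl⟩ | ⟨i, h, rfl, rfl⟩
    · exact S.A_rank v ℓ hA c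
    · exact S.rank_lt _
  have hacyc : IsAcyclicDigraph D := by
    intro a htg
    have : ∀ x y, Relation.TransGen D x y →
        Sum.elim S.rank (fun _ => 3 ^ n) x < Sum.elim S.rank (fun _ => 3 ^ n) y := by
      intro x y h
      induction h with
      | single h => exact hmono _ _ h
      | tail _ h ih => exact ih.trans (hmono _ _ h)
    exact lt_irrefl _ (this a a htg)
  refine Nat.sInf_le ⟨D, hacyc, ?_⟩
  ext a b
  constructor
  · rintro ⟨hne, x, ⟨u, c, rfl, hu⟩, ⟨u', c', rfl, hu'⟩⟩
    refine ⟨u, u', rfl, rfl, ?_⟩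
    have hne' : u ≠ u' := fun h => hne (by rw [h])
    rcases hu with ⟨v, ℓ, hx, hA, rfl⟩ | ⟨i, h, hx, rfl⟩
    · rcases hu' with ⟨v', ℓ', hx', hA', rfl⟩ | ⟨i', h', hx', rfl⟩
      · rw [hx] at hx'
        injection hx' with hv
        subst hv
        rw [hA] at hA'
        injection hA' with hl
        subst hl
        have hcc : c ≠ c' := fun h => hne' (by rw [h])
        exact hline_adj ℓ hcc
      · rw [hx] at hx'; exact absurd hx' (by simp)
    · rcases hu' with ⟨v', ℓ', hx', hA', rfl⟩ | ⟨i', h', hx', rfl⟩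
      · rw [hx] at hx'; exact absurd hx' (by simp)
      · rw [hx] at hx'
        injection hx' with hi
        subst hi
        have hcc : c ≠ c' := fun h => hne' (by rw [h])
        exact hline_adj _ hcc
  · rintro ⟨u, v, rfl, rfl, hadj⟩
    refine ⟨by simpa using hadj.ne, ?_⟩
    obtain ⟨ℓ, hu, hv⟩ := edge_line hadj
    rcases S.cover ℓ with ⟨w, hw⟩ | hmem
    · exact ⟨Sum.inl w, ⟨u, u ℓ.1.1, rfl, Or.inl ⟨w, ℓ, rfl, hw, hu⟩⟩,
        ⟨v, v ℓ.1.1, rfl, Or.inl ⟨w, ℓ, rfl, hw, hv⟩⟩⟩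
    · have hidx : S.left.idxOf ℓ < S.left.length := List.idxOf_lt_length_iff.mpr hmem
      have hidxK : S.left.idxOf ℓ < K := lt_of_lt_of_le hidx hlen
      have hget : S.left.get ⟨(⟨S.left.idxOf ℓ, hidxK⟩ : Fin K), hidx⟩ = ℓ := by
        simpa using List.getElem_idxOf hidx
      refine ⟨Sum.inr ⟨S.left.idxOf ℓ, hidxK⟩,
        ⟨u, u ℓ.1.1, rfl, Or.inr ⟨⟨S.left.idxOf ℓ, hidxK⟩, hidx, rfl, ?_⟩⟩,
        ⟨v, v ℓ.1.1, rfl, Or.inr ⟨⟨S.left.idxOf ℓ, hidxK⟩, hidx, rfl, ?_⟩⟩⟩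
      · rw [hget]; exact hu
      · rw [hget]; exact hv


def baseRank : (Fin 3 → Fin 3) → ℕ := fun v =>
  match v 0, v 1, v 2 with
  | 0, 0, 0 => 0
  | 0, 0, 1 => 1
  | 0, 0, 2 => 2
  | 0, 1, 0 => 3
  | 0, 2, 0 => 4
  | 0, 1, 1 => 5
  | 0, 1, 2 => 6
  | 0, 2, 1 => 7
  | 0, 2, 2 => 8
  | 1, 0, 0 => 9
  | 2, 0, 0 => 10
  | 1, 0, 1 => 11
  | 2, 0, 1 => 12
  | 1, 0, 2 => 13
  | 2, 0, 2 => 14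
  | 1, 1, 0 => 15
  | 1, 2, 0 => 16
  | 2, 1, 0 => 17
  | 2, 2, 0 => 18
  | 1, 1, 1 => 19
  | 2, 1, 1 => 20
  | 1, 2, 1 => 21
  | 1, 1, 2 => 22
  | 2, 2, 1 => 23
  | 2, 1, 2 => 24
  | 1, 2, 2 => 25
  | 2, 2, 2 => 26

def baseUnrank : ℕ → (Fin 3 → Fin 3)
  | 0 => ![0,0,0]
  | 1 => ![0,0,1]
  | 2 => ![0,0,2]
  | 3 => ![0,1,0]
  | 4 => ![0,2,0]
  | 5 => ![0,1,1]
  | 6 => ![0,1,2]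
  | 7 => ![0,2,1]
  | 8 => ![0,2,2]
  | 9 => ![1,0,0]
  | 10 => ![2,0,0]
  | 11 => ![1,0,1]
  | 12 => ![2,0,1]
  | 13 => ![1,0,2]
  | 14 => ![2,0,2]
  | 15 => ![1,1,0]
  | 16 => ![1,2,0]
  | 17 => ![2,1,0]
  | 18 => ![2,2,0]
  | 19 => ![1,1,1]
  | 20 => ![2,1,1]
  | 21 => ![1,2,1]
  | 22 => ![1,1,2]
  | 23 => ![2,2,1]
  | 24 => ![2,1,2]
  | 25 => ![1,2,2]
  | 26 => ![2,2,2]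
  | _ => ![0,0,0]

def baseA : (Fin 3 → Fin 3) → Option (HLine 3) := fun v =>
  match v 0, v 1, v 2 with
  | 0, 0, 0 => none
  | 0, 0, 1 => none
  | 0, 0, 2 => none
  | 0, 1, 0 => some ⟨(2, ![0,0,0]), by decide⟩
  | 0, 2, 0 => none
  | 0, 1, 1 => some ⟨(1, ![0,0,0]), by decide⟩
  | 0, 1, 2 => none
  | 0, 2, 1 => some ⟨(2, ![0,1,0]), by decide⟩
  | 0, 2, 2 => some ⟨(1, ![0,0,1]), by decide⟩
  | 1, 0, 0 => some ⟨(2, ![0,2,0]), by decide⟩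
  | 2, 0, 0 => some ⟨(1, ![0,0,2]), by decide⟩
  | 1, 0, 1 => some ⟨(0, ![0,0,0]), by decide⟩
  | 2, 0, 1 => none
  | 1, 0, 2 => some ⟨(0, ![0,0,1]), by decide⟩
  | 2, 0, 2 => some ⟨(2, ![1,0,0]), by decide⟩
  | 1, 1, 0 => some ⟨(2, ![2,0,0]), by decide⟩
  | 1, 2, 0 => some ⟨(0, ![0,0,2]), by decide⟩
  | 2, 1, 0 => some ⟨(1, ![1,0,0]), by decide⟩
  | 2, 2, 0 => some ⟨(0, ![0,1,0]), by decide⟩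
  | 1, 1, 1 => some ⟨(1, ![2,0,0]), by decide⟩
  | 2, 1, 1 => some ⟨(0, ![0,2,0]), by decide⟩
  | 1, 2, 1 => some ⟨(0, ![0,1,1]), by decide⟩
  | 1, 1, 2 => some ⟨(1, ![1,0,1]), by decide⟩
  | 2, 2, 1 => some ⟨(2, ![1,1,0]), by decide⟩
  | 2, 1, 2 => some ⟨(0, ![0,2,1]), by decide⟩
  | 1, 2, 2 => some ⟨(0, ![0,1,2]), by decide⟩
  | 2, 2, 2 => some ⟨(1, ![1,0,2]), by decide⟩

def baseLeft : List (HLine 3) := [⟨(0, ![0,2,2]), by decide⟩, ⟨(1, ![2,0,1]), by decide⟩, ⟨(1, ![2,0,2]), by decide⟩, ⟨(2, ![1,2,0]), by decide⟩, ⟨(2, ![2,1,0]), by decide⟩, ⟨(2, ![2,2,0]), by decide⟩]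
def chk : Option (HLine 3) → ℕ → Fin 3 → Bool := fun o r c =>
  match o with
  | none => true
  | some ℓ => decide (baseRank (HLine.mem ℓ c) < r)

def baseScheme : Scheme 3 where
  rank := baseRank
  unrank := baseUnrank
  A := baseA
  left := baseLeft
  rank_lt := by decide
  unrank_rank := by decide
  rank_unrank := by decide
  A_rank := by
    have h : ∀ v c, chk (baseA v) (baseRank v) c = true := by decide
    intro v ℓ hl c
    have := h v c
    rw [hl] at this
    simpa [chk] using this
  A_inj := by
    have h : ∀ u v, baseA u = baseA v → (baseA u = none ∨ u = v) := by decide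
    intro u v ℓ hu hv
    rcases h u v (hu.trans hv.symm) with h1 | h1
    · rw [hu] at h1; exact absurd h1 (by simp)
    · exact h1
  left_nodup := by decide
  left_unused := by
    have h : ∀ v, ∀ ℓ ∈ baseLeft, baseA v ≠ some ℓ := by decide
    intro ℓ hl v
    exact h v ℓ hl
  cover := by
    have h : ∀ (j : Fin 3) (p : Fin 3 → Fin 3), p j = 0 →
        ((∃ v ℓ, baseA v = some ℓ ∧ ℓ.1 = (j, p)) ∨ (∃ ℓ ∈ baseLeft, ℓ.1 = (j, p))) := by
      decide
    intro ℓ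
    rcases h ℓ.1.1 ℓ.1.2 ℓ.2 with ⟨v, ℓ', hv, he⟩ | ⟨ℓ', hm, he⟩
    · left
      refine ⟨v, ?_⟩
      rwa [show ℓ' = ℓ from Subtype.ext he] at hv
    · right
      rwa [show ℓ' = ℓ from Subtype.ext he] at hm
  hexc := by
    have : (Finset.univ.filter fun v => baseA v = none).card = 6 := by decide
    omega
  hlen_lb := by
    have h1 : (Finset.univ.filter fun v => baseA v = none).card = 6 := by decide
    have h2 : baseLeft.length = 6 := by decide
    omega
  hlen_ub := by
    have h1 : (Finset.univ.filter fun v => baseA v = none).card = 6 := by decide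
    have h2 : baseLeft.length = 6 := by decide
    omega


section Step
variable {n : ℕ} (S : Scheme n)

noncomputable def excL : List (Fin n → Fin 3) := (Finset.univ.filter fun v => S.A v = none).toList

lemma mem_excL {x : Fin n → Fin 3} : x ∈ excL S ↔ S.A x = none := by
  simp [excL, Finset.mem_toList]

lemma excL_nodup : (excL S).Nodup := Finset.nodup_toList _

lemma excL_len : (excL S).length = (Finset.univ.filter fun v => S.A v = none).card :=
  Finset.length_toList _

lemma exc_min : S.A (S.unrank 0) = none := by
  cases h : S.A (S.unrank 0) with
  | none => rfl
  | some ℓ =>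
    have h0 := S.A_rank _ _ h 0
    rw [S.rank_unrank 0 (pow_pos (by norm_num) n)] at h0
    omega

lemma one_le_exc : 1 ≤ (excL S).length := by
  rw [excL_len]
  rw [Nat.succ_le_iff, Finset.card_pos]
  exact ⟨S.unrank 0, by simp [exc_min]⟩

lemma llen_pos : 0 < S.left.length :=
  lt_of_lt_of_le (lt_of_lt_of_le Nat.zero_lt_one (one_le_exc S)) (excL_len S ▸ S.hlen_lb)

lemma exc_le_llen : (excL S).length ≤ S.left.length := excL_len S ▸ S.hlen_lb

lemma idx_lt {x : Fin n → Fin 3} (h : S.A x = none) :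
    (excL S).idxOf x < S.left.length :=
  lt_of_lt_of_le (List.idxOf_lt_length_iff.mpr ((mem_excL S).mpr h)) (exc_le_llen S)

noncomputable def stepA (v : Fin (n+1) → Fin 3) : Option (HLine (n+1)) :=
  if v 0 = 0 then (S.A (Fin.tail v)).map (lift 0)
  else if v 0 = 1 then
    if h : S.A (Fin.tail v) = none then
      some (lift 0 (S.left[(excL S).idxOf (Fin.tail v)]'(idx_lt S h)))
    else (S.A (Fin.tail v)).map (lift 1)
  else
    if S.rank (Fin.tail v) = 0 then some (lift 1 (S.left[0]'(llen_pos S)))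
    else some (vert (S.unrank (S.rank (Fin.tail v) - 1)))

noncomputable def stepLeft : List (HLine (n+1)) :=
  (S.left.drop (excL S).length).map (lift 0) ++ ((S.left.drop 1).map (lift 1)
    ++ ((Finset.univ : Finset (HLine n)).toList.map (lift 2)
    ++ [vert (S.unrank (3 ^ n - 1))]))

def stepRank (v : Fin (n+1) → Fin 3) : ℕ := (v 0 : ℕ) * 3 ^ n + S.rank (Fin.tail v)

def stepUnrank (i : ℕ) : Fin (n+1) → Fin 3 :=
  Fin.cons ⟨(i / 3 ^ n) % 3, Nat.mod_lt _ (by norm_num)⟩ (S.unrank (i % 3 ^ n))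

lemma out0 {v : Fin (n+1) → Fin 3} {lh : HLine (n+1)} (h0 : v 0 = 0)
    (h : stepA S v = some lh) : ∃ ℓ, S.A (Fin.tail v) = some ℓ ∧ lh = lift 0 ℓ := by
  rw [stepA, if_pos h0] at h
  obtain ⟨ℓ, h1, h2⟩ := Option.map_eq_some_iff.mp h
  exact ⟨ℓ, h1, h2.symm⟩

lemma out1 {v : Fin (n+1) → Fin 3} {lh : HLine (n+1)} (h0 : v 0 = 1)
    (h : stepA S v = some lh) :
    (∃ h1 : S.A (Fin.tail v) = none,
        lh = lift 0 (S.left[(excL S).idxOf (Fin.tail v)]'(idx_lt S h1))) ∨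
    (∃ ℓ, S.A (Fin.tail v) = some ℓ ∧ lh = lift 1 ℓ) := by
  rw [stepA, if_neg (by rw [h0]; decide), if_pos h0] at h
  by_cases h1 : S.A (Fin.tail v) = none
  · rw [dif_pos h1] at h
    exact Or.inl ⟨h1, (Option.some_injective _ h).symm⟩
  · rw [dif_neg h1] at h
    obtain ⟨ℓ, hl1, hl2⟩ := Option.map_eq_some_iff.mp h
    exact Or.inr ⟨ℓ, hl1, hl2.symm⟩

lemma out2 {v : Fin (n+1) → Fin 3} {lh : HLine (n+1)} (h0 : v 0 = 2)
    (h : stepA S v = some lh) :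
    (S.rank (Fin.tail v) = 0 ∧ lh = lift 1 (S.left[0]'(llen_pos S))) ∨
    (S.rank (Fin.tail v) ≠ 0 ∧ lh = vert (S.unrank (S.rank (Fin.tail v) - 1))) := by
  rw [stepA, if_neg (by rw [h0]; decide), if_neg (by rw [h0]; decide)] at h
  by_cases h1 : S.rank (Fin.tail v) = 0
  · rw [if_pos h1] at h
    exact Or.inl ⟨h1, (Option.some_injective _ h).symm⟩
  · rw [if_neg h1] at h
    exact Or.inr ⟨h1, (Option.some_injective _ h).symm⟩

lemma stepRank_cons (c : Fin 3) (x : Fin n → Fin 3) :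
    stepRank S (Fin.cons c x) = (c : ℕ) * 3 ^ n + S.rank x := by
  simp [stepRank, Fin.cons_zero, Fin.tail_cons]

lemma stepRank_lt (v : Fin (n+1) → Fin 3) : stepRank S v < 3 ^ (n+1) := by
  have h0 : (v 0 : ℕ) ≤ 2 := by omega
  have h1 : (v 0 : ℕ) * 3 ^ n ≤ 2 * 3 ^ n := Nat.mul_le_mul_right _ h0
  have h2 := S.rank_lt (Fin.tail v)
  rw [pow_succ, stepRank]
  linarith

lemma stepUnrank_rank (v : Fin (n+1) → Fin 3) : stepUnrank S (stepRank S v) = v := by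
  have hP : 0 < 3 ^ n := pow_pos (by norm_num) n
  have hr := S.rank_lt (Fin.tail v)
  have hdiv : stepRank S v / 3 ^ n = (v 0 : ℕ) := by
    rw [stepRank, mul_comm, Nat.mul_add_div hP, Nat.div_eq_of_lt hr, add_zero]
  have hmod : stepRank S v % 3 ^ n = S.rank (Fin.tail v) := by
    rw [stepRank, add_comm, Nat.add_mul_mod_self_right, Nat.mod_eq_of_lt hr]
  apply eq_of_parts
  · simp only [stepUnrank, Fin.cons_zero]
    apply Fin.ext
    show (stepRank S v / 3 ^ n) % 3 = (v 0 : ℕ)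
    rw [hdiv, Nat.mod_eq_of_lt (v 0).isLt]
  · simp only [stepUnrank, Fin.tail_cons]
    rw [hmod, S.unrank_rank]

lemma stepRank_unrank (i : ℕ) (hi : i < 3 ^ (n+1)) : stepRank S (stepUnrank S i) = i := by
  have hP : 0 < 3 ^ n := pow_pos (by norm_num) n
  have hdivlt : i / 3 ^ n < 3 := by
    rw [Nat.div_lt_iff_lt_mul hP]
    rw [pow_succ] at hi
    linarith
  rw [stepUnrank, stepRank, Fin.cons_zero, Fin.tail_cons]
  show (i / 3 ^ n) % 3 * 3 ^ n + S.rank (S.unrank (i % 3 ^ n)) = i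
  rw [Nat.mod_eq_of_lt hdivlt, S.rank_unrank _ (Nat.mod_lt _ hP), mul_comm,
    Nat.div_add_mod]

lemma stepA_rank (v : Fin (n+1) → Fin 3) (lh : HLine (n+1))
    (h : stepA S v = some lh) (d : Fin 3) :
    stepRank S (lh.mem d) < stepRank S v := by
  have hP : 0 < 3 ^ n := pow_pos (by norm_num) n
  have hRv : stepRank S v = (v 0 : ℕ) * 3 ^ n + S.rank (Fin.tail v) := rfl
  rcases fin3cases (v 0) with h0 | h0 | h0
  · obtain ⟨ℓ, hA, rfl⟩ := out0 S h0 h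
    rw [mem_lift, stepRank_cons]
    have := S.A_rank _ _ hA d
    rw [hRv, h0]
    show (0:ℕ) * 3 ^ n + _ < (0:ℕ) * 3 ^ n + _
    simpa using this
  · rcases out1 S h0 h with ⟨h1, rfl⟩ | ⟨ℓ, hA, rfl⟩
    · rw [mem_lift, stepRank_cons, hRv, h0]
      have := S.rank_lt ((S.left[(excL S).idxOf (Fin.tail v)]'(idx_lt S h1)).mem d)
      show (0:ℕ) * 3 ^ n + _ < (1:ℕ) * 3 ^ n + _
      omega
    · rw [mem_lift, stepRank_cons, hRv, h0]
      have := S.A_rank _ _ hA d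
      show (1:ℕ) * 3 ^ n + _ < (1:ℕ) * 3 ^ n + _
      omega
  · rcases out2 S h0 h with ⟨h1, rfl⟩ | ⟨h1, rfl⟩
    · rw [mem_lift, stepRank_cons, hRv, h0]
      have := S.rank_lt ((S.left[0]'(llen_pos S)).mem d)
      show (1:ℕ) * 3 ^ n + _ < (2:ℕ) * 3 ^ n + _
      omega
    · rw [mem_vert, stepRank_cons, hRv, h0]
      have hrt := S.rank_lt (Fin.tail v)
      have hur : S.rank (S.unrank (S.rank (Fin.tail v) - 1)) = S.rank (Fin.tail v) - 1 :=
        S.rank_unrank _ (by omega)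
      rw [hur]
      have hd : (d : ℕ) ≤ 2 := by omega
      have hd1 : (d : ℕ) * 3 ^ n ≤ 2 * 3 ^ n := Nat.mul_le_mul_right _ hd
      show (d : ℕ) * 3 ^ n + _ < (2:ℕ) * 3 ^ n + _
      rcases fin3cases d with hd0 | hd0 | hd0 <;> subst hd0
      · show (0:ℕ) * 3 ^ n + _ < _
        omega
      · show (1:ℕ) * 3 ^ n + _ < _
        omega
      · show (2:ℕ) * 3 ^ n + _ < _
        omega

lemma getElem_left_mem (i : ℕ) (h : i < S.left.length) : S.left[i] ∈ S.left :=
  List.getElem_mem h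

lemma stepA_inj (u v : Fin (n+1) → Fin 3) (lh : HLine (n+1))
    (hu : stepA S u = some lh) (hv : stepA S v = some lh) : u = v := by
  have main : ∀ {a b : Fin (n+1) → Fin 3}, stepA S a = some lh → stepA S b = some lh →
      (a 0 : ℕ) ≤ (b 0 : ℕ) → a = b := by
    intro a b ha hb hab
    rcases fin3cases (a 0) with ha0 | ha0 | ha0 <;>
      rcases fin3cases (b 0) with hb0 | hb0 | hb0
    -- (0,0)
    · obtain ⟨ℓ, hA, rfl⟩ := out0 S ha0 ha
      obtain ⟨ℓ', hA', he⟩ := out0 S hb0 hb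
      have : ℓ' = ℓ := lift_inj 0 he.symm
      subst this
      exact eq_of_parts (ha0.trans hb0.symm) (S.A_inj _ _ _ hA hA')
    -- (0,1)
    · obtain ⟨ℓ, hA, rfl⟩ := out0 S ha0 ha
      rcases out1 S hb0 hb with ⟨h1, he⟩ | ⟨ℓ', hA', he⟩
      · have : ℓ = _ := lift_inj 0 he
        exact absurd hA (by rw [this]; exact S.left_unused _ (getElem_left_mem S _ _) _)
      · exact absurd he (lift_ne_lift (by decide) _ _)
    -- (0,2)
    · obtain ⟨ℓ, hA, rfl⟩ := out0 S ha0 ha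
      rcases out2 S hb0 hb with ⟨h1, he⟩ | ⟨h1, he⟩
      · exact absurd he (lift_ne_lift (by decide) _ _)
      · exact absurd he.symm (vert_ne_lift _ _ _)
    -- (1,0)
    · exact absurd (ha0 ▸ hb0 ▸ hab) (by decide)
    -- (1,1)
    · rcases out1 S ha0 ha with ⟨h1, rfl⟩ | ⟨ℓ, hA, rfl⟩ <;>
        rcases out1 S hb0 hb with ⟨h1', he⟩ | ⟨ℓ', hA', he⟩
      · have hLL := lift_inj 0 he
        have hidx : (excL S).idxOf (Fin.tail b) = (excL S).idxOf (Fin.tail a) :=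
          (List.Nodup.getElem_inj_iff S.left_nodup).mp hLL.symm
        have hta : Fin.tail a ∈ excL S := (mem_excL S).mpr h1
        have htb : Fin.tail b ∈ excL S := (mem_excL S).mpr h1'
        have : Fin.tail a = Fin.tail b := by
          have e1 := List.getElem_idxOf (List.idxOf_lt_length_iff.mpr hta)
          have e2 := List.getElem_idxOf (List.idxOf_lt_length_iff.mpr htb)
          simp only [hidx] at e2
          rw [← e1, ← e2]
        exact eq_of_parts (ha0.trans hb0.symm) this
      · exact absurd he.symm (lift_ne_lift (by decide) _ _)
      · exact absurd he (lift_ne_lift (by decide) _ _)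
      · have hLL := lift_inj 1 he
        subst hLL
        exact eq_of_parts (ha0.trans hb0.symm) (S.A_inj _ _ _ hA hA')
    -- (1,2)
    · rcases out1 S ha0 ha with ⟨h1, rfl⟩ | ⟨ℓ, hA, rfl⟩ <;>
        rcases out2 S hb0 hb with ⟨h2, he⟩ | ⟨h2, he⟩
      · exact absurd he (lift_ne_lift (by decide) _ _)
      · exact absurd he.symm (vert_ne_lift _ _ _)
      · have hLL := lift_inj 1 he
        exact absurd hA (by rw [hLL]; exact S.left_unused _ (getElem_left_mem S _ _) _)
      · exact absurd he.symm (vert_ne_lift _ _ _)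
    -- (2,0)
    · exact absurd (ha0 ▸ hb0 ▸ hab) (by decide)
    -- (2,1)
    · exact absurd (ha0 ▸ hb0 ▸ hab) (by decide)
    -- (2,2)
    · rcases out2 S ha0 ha with ⟨h1, rfl⟩ | ⟨h1, rfl⟩ <;>
        rcases out2 S hb0 hb with ⟨h2, he⟩ | ⟨h2, he⟩
      · have : Fin.tail a = Fin.tail b := by
          rw [← S.unrank_rank (Fin.tail a), ← S.unrank_rank (Fin.tail b), h1, h2]
        exact eq_of_parts (ha0.trans hb0.symm) this
      · exact absurd he.symm (vert_ne_lift _ _ _)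
      · exact absurd he (vert_ne_lift _ _ _)
      · have hvv := vert_inj he
        have hP : 0 < 3 ^ n := pow_pos (by norm_num) n
        have hra := S.rank_lt (Fin.tail a)
        have hrb := S.rank_lt (Fin.tail b)
        have e1 : S.rank (S.unrank (S.rank (Fin.tail a) - 1)) = S.rank (Fin.tail a) - 1 :=
          S.rank_unrank _ (by omega)
        have e2 : S.rank (S.unrank (S.rank (Fin.tail b) - 1)) = S.rank (Fin.tail b) - 1 :=
          S.rank_unrank _ (by omega)
        have : S.rank (Fin.tail a) = S.rank (Fin.tail b) := by
          have := congrArg S.rank hvv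
          rw [e1, e2] at this
          omega
        have ht : Fin.tail a = Fin.tail b := by
          rw [← S.unrank_rank (Fin.tail a), ← S.unrank_rank (Fin.tail b), this]
        exact eq_of_parts (ha0.trans hb0.symm) ht
  rcases le_total ((u 0 : ℕ)) ((v 0 : ℕ)) with h | h
  · exact main hu hv h
  · exact (main hv hu h).symm

lemma stepA_none_iff (v : Fin (n+1) → Fin 3) :
    stepA S v = none ↔ (v 0 = 0 ∧ S.A (Fin.tail v) = none) := by
  rcases fin3cases (v 0) with h0 | h0 | h0
  · rw [stepA, if_pos h0]
    simp [h0, Option.map_eq_none_iff]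
  · rw [stepA, if_neg (by rw [h0]; decide), if_pos h0]
    by_cases h1 : S.A (Fin.tail v) = none
    · rw [dif_pos h1]; simp [h0]
    · rw [dif_neg h1]
      simp only [Option.map_eq_none_iff, h1]
      simp [h0]
  · rw [stepA, if_neg (by rw [h0]; decide), if_neg (by rw [h0]; decide)]
    by_cases h1 : S.rank (Fin.tail v) = 0
    · rw [if_pos h1]; simp [h0]
    · rw [if_neg h1]; simp [h0]

lemma step_exc_card :
    (Finset.univ.filter fun v => stepA S v = none).card =
      (Finset.univ.filter fun x => S.A x = none).card := by
  have himg : (Finset.univ.filter fun v => stepA S v = none) =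
      (Finset.univ.filter fun x => S.A x = none).image (Fin.cons 0) := by
    ext v
    simp only [Finset.mem_filter, Finset.mem_univ, true_and, Finset.mem_image]
    rw [stepA_none_iff]
    constructor
    · rintro ⟨h0, h1⟩
      exact ⟨Fin.tail v, h1, by rw [← h0, Fin.cons_self_tail]⟩
    · rintro ⟨x, hx, rfl⟩
      exact ⟨Fin.cons_zero _ _, by rwa [Fin.tail_cons]⟩
  rw [himg, Finset.card_image_of_injective _
    (Fin.cons_right_injective (α := fun _ : Fin (n+1) => Fin 3) 0)]

lemma mem_stepLeft_0 {ℓ : HLine n} (h : ℓ ∈ S.left.drop (excL S).length) :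
    lift 0 ℓ ∈ stepLeft S := by
  rw [stepLeft]
  exact List.mem_append_left _ (List.mem_map_of_mem h)

lemma mem_stepLeft_1 {ℓ : HLine n} (h : ℓ ∈ S.left.drop 1) :
    lift 1 ℓ ∈ stepLeft S := by
  rw [stepLeft]
  exact List.mem_append_right _ (List.mem_append_left _ (List.mem_map_of_mem h))

lemma mem_stepLeft_2 (ℓ : HLine n) : lift 2 ℓ ∈ stepLeft S := by
  rw [stepLeft]
  refine List.mem_append_right _ (List.mem_append_right _ (List.mem_append_left _ ?_))
  exact List.mem_map_of_mem (Finset.mem_toList.mpr (Finset.mem_univ _))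

lemma mem_stepLeft_v : vert (S.unrank (3 ^ n - 1)) ∈ stepLeft S := by
  rw [stepLeft]
  refine List.mem_append_right _ (List.mem_append_right _ (List.mem_append_right _ ?_))
  simp

lemma left_mem_drop {ℓ : HLine n} (hm : ℓ ∈ S.left) {t : ℕ}
    (hge : t ≤ S.left.idxOf ℓ) : ℓ ∈ S.left.drop t := by
  have hlt : S.left.idxOf ℓ < S.left.length := List.idxOf_lt_length_iff.mpr hm
  have h2 : S.left.idxOf ℓ - t < (S.left.drop t).length := by
    rw [List.length_drop]; omega
  have : (S.left.drop t)[S.left.idxOf ℓ - t] = ℓ := by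
    rw [List.getElem_drop]
    have : t + (S.left.idxOf ℓ - t) = S.left.idxOf ℓ := by omega
    simp only [this]
    exact List.getElem_idxOf hlt
  rw [← this]
  exact List.getElem_mem _

lemma step_cover (lh : HLine (n+1)) :
    (∃ v, stepA S v = some lh) ∨ lh ∈ stepLeft S := by
  have hP : 0 < 3 ^ n := pow_pos (by norm_num) n
  rcases Fin.eq_zero_or_eq_succ lh.1.1 with hj | ⟨j, hj⟩
  · -- vertical line
    rw [vert_decomp lh hj]
    set x := Fin.tail lh.1.2 with hx
    by_cases hxr : S.rank x = 3 ^ n - 1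
    · right
      have : x = S.unrank (3 ^ n - 1) := by rw [← hxr, S.unrank_rank]
      rw [this]
      exact mem_stepLeft_v S
    · left
      refine ⟨Fin.cons 2 (S.unrank (S.rank x + 1)), ?_⟩
      have hlt : S.rank x + 1 < 3 ^ n := by
        have := S.rank_lt x
        omega
      rw [stepA]
      rw [if_neg (by rw [Fin.cons_zero]; decide), if_neg (by rw [Fin.cons_zero]; decide)]
      rw [Fin.tail_cons, S.rank_unrank _ hlt]
      rw [if_neg (by omega)]
      congr 1
      congr 1
      rw [Nat.add_sub_cancel, S.unrank_rank]
  · -- lifted line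
    rw [lift_decomp lh j hj]
    set c := lh.1.2 0 with hc
    set ℓ : HLine n := ⟨(j, Fin.tail lh.1.2), _⟩ with hℓ
    rcases fin3cases c with hc0 | hc0 | hc0 <;> rw [hc0]
    · -- copy 0
      rcases S.cover ℓ with ⟨v, hv⟩ | hm
      · left
        refine ⟨Fin.cons 0 v, ?_⟩
        rw [stepA, if_pos (Fin.cons_zero _ _), Fin.tail_cons, hv]
        rfl
      · -- leftover: either preyed by a copy-1 exception or still leftover
        by_cases hi : S.left.idxOf ℓ < (excL S).length
        · left
          refine ⟨Fin.cons 1 ((excL S)[S.left.idxOf ℓ]'hi), ?_⟩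
          have hxm : (excL S)[S.left.idxOf ℓ]'hi ∈ excL S := List.getElem_mem _
          have hnone : S.A ((excL S)[S.left.idxOf ℓ]'hi) = none := (mem_excL S).mp hxm
          rw [stepA]
          rw [if_neg (by rw [Fin.cons_zero]; decide), if_pos (Fin.cons_zero _ _)]
          simp only [Fin.tail_cons]
          rw [dif_pos hnone]
          congr 1
          congr 1
          have e1 : (excL S).idxOf ((excL S)[S.left.idxOf ℓ]'hi) = S.left.idxOf ℓ :=
            (excL_nodup S).idxOf_getElem _ _
          simp only [e1]
          exact List.getElem_idxOf (List.idxOf_lt_length_iff.mpr hm)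
        · right
          exact mem_stepLeft_0 S (left_mem_drop S hm (by omega))
    · -- copy 1
      rcases S.cover ℓ with ⟨v, hv⟩ | hm
      · left
        refine ⟨Fin.cons 1 v, ?_⟩
        rw [stepA]
        rw [if_neg (by rw [Fin.cons_zero]; decide), if_pos (Fin.cons_zero _ _)]
        simp only [Fin.tail_cons]
        rw [dif_neg (by rw [hv]; simp), hv]
        rfl
      · by_cases hi : S.left.idxOf ℓ = 0
        · left
          refine ⟨Fin.cons 2 (S.unrank 0), ?_⟩
          rw [stepA]
          rw [if_neg (by rw [Fin.cons_zero]; decide), if_neg (by rw [Fin.cons_zero]; decide)]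
          rw [Fin.tail_cons, S.rank_unrank 0 hP, if_pos rfl]
          congr 2
          have hgi := List.getElem_idxOf (List.idxOf_lt_length_iff.mpr hm)
          simp only [hi] at hgi
          exact hgi
        · right
          exact mem_stepLeft_1 S (left_mem_drop S hm (by omega))
    · right
      exact mem_stepLeft_2 S ℓ

lemma drop_getElem_rep {ℓ : HLine n} {t : ℕ} (h : ℓ ∈ S.left.drop t) :
    ∃ k, ∃ hk : t + k < S.left.length, S.left[t + k] = ℓ := by
  obtain ⟨k, hk, he⟩ := List.mem_iff_getElem.mp h
  rw [List.getElem_drop] at he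
  have hlt : t + k < S.left.length := by
    have := hk
    rw [List.length_drop] at this
    omega
  exact ⟨k, hlt, he⟩

lemma stepLeft_nodup : (stepLeft S).Nodup := by
  have hd0 : (S.left.drop (excL S).length).Nodup :=
    (List.drop_sublist _ _).nodup S.left_nodup
  have hd1 : (S.left.drop 1).Nodup := (List.drop_sublist _ _).nodup S.left_nodup
  have hn0 : ((S.left.drop (excL S).length).map (lift 0)).Nodup :=
    hd0.map (lift_inj 0)
  have hn1 : ((S.left.drop 1).map (lift 1)).Nodup := hd1.map (lift_inj 1)
  have hn2 : (((Finset.univ : Finset (HLine n)).toList).map (lift 2)).Nodup :=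
    (Finset.nodup_toList _).map (lift_inj 2)
  rw [stepLeft]
  refine List.Nodup.append hn0 (List.Nodup.append hn1 (List.Nodup.append hn2
    (List.nodup_singleton _) ?_) ?_) ?_
  · -- m2 disjoint [vert]
    intro a ha hb
    obtain ⟨ℓ, _, rfl⟩ := List.mem_map.mp ha
    rw [List.mem_singleton] at hb
    exact vert_ne_lift _ _ _ hb.symm
  · -- m1 disjoint (m2 ++ [vert])
    intro a ha hb
    obtain ⟨ℓ, _, rfl⟩ := List.mem_map.mp ha
    rcases List.mem_append.mp hb with hb | hb
    · obtain ⟨ℓ', _, he⟩ := List.mem_map.mp hb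
      exact lift_ne_lift (by decide) ℓ' ℓ he
    · rw [List.mem_singleton] at hb
      exact vert_ne_lift _ _ _ hb.symm
  · -- m0 disjoint rest
    intro a ha hb
    obtain ⟨ℓ, _, rfl⟩ := List.mem_map.mp ha
    rcases List.mem_append.mp hb with hb | hb
    · obtain ⟨ℓ', _, he⟩ := List.mem_map.mp hb
      exact lift_ne_lift (by decide) ℓ' ℓ he
    · rcases List.mem_append.mp hb with hb | hb
      · obtain ⟨ℓ', _, he⟩ := List.mem_map.mp hb
        exact lift_ne_lift (by decide) ℓ' ℓ he
      · rw [List.mem_singleton] at hb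
        exact vert_ne_lift _ _ _ hb.symm

lemma stepLeft_unused : ∀ lh ∈ stepLeft S, ∀ v, stepA S v ≠ some lh := by
  intro lh hmem v h
  rw [stepLeft] at hmem
  rcases List.mem_append.mp hmem with hm0 | hmem
  · -- segment m0 : lift 0 of drop E
    obtain ⟨ℓ, hdrop, rfl⟩ := List.mem_map.mp hm0
    obtain ⟨k, hk, hke⟩ := drop_getElem_rep S hdrop
    rcases fin3cases (v 0) with h0 | h0 | h0
    · obtain ⟨ℓu, hA, he⟩ := out0 S h0 h
      exact S.left_unused ℓ (List.mem_of_mem_drop hdrop) _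
        (by rwa [← lift_inj 0 he] at hA)
    · rcases out1 S h0 h with ⟨h1, he⟩ | ⟨ℓu, hA, he⟩
      · have hℓeq := lift_inj 0 he
        have hidxlt : (excL S).idxOf (Fin.tail v) < (excL S).length :=
          List.idxOf_lt_length_iff.mpr ((mem_excL S).mpr h1)
        have hkk : S.left[(excL S).idxOf (Fin.tail v)]'(idx_lt S h1) =
            S.left[(excL S).length + k]'hk := by rw [← hℓeq, hke]
        have := (List.Nodup.getElem_inj_iff S.left_nodup).mp hkk
        omega
      · exact lift_ne_lift (by decide) ℓu ℓ he.symm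
    · rcases out2 S h0 h with ⟨h1, he⟩ | ⟨h1, he⟩
      · exact lift_ne_lift (by decide) _ ℓ he.symm
      · exact vert_ne_lift _ _ _ he.symm
  rcases List.mem_append.mp hmem with hm1 | hmem
  · -- segment m1 : lift 1 of drop 1
    obtain ⟨ℓ, hdrop, rfl⟩ := List.mem_map.mp hm1
    obtain ⟨k, hk, hke⟩ := drop_getElem_rep S hdrop
    rcases fin3cases (v 0) with h0 | h0 | h0
    · obtain ⟨ℓu, hA, he⟩ := out0 S h0 h
      exact lift_ne_lift (by decide) ℓu ℓ he.symm
    · rcases out1 S h0 h with ⟨h1, he⟩ | ⟨ℓu, hA, he⟩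
      · exact lift_ne_lift (by decide) _ ℓ he.symm
      · exact S.left_unused ℓ (List.mem_of_mem_drop hdrop) _
          (by rwa [← lift_inj 1 he] at hA)
    · rcases out2 S h0 h with ⟨h1, he⟩ | ⟨h1, he⟩
      · have hℓeq := lift_inj 1 he
        have hkk : S.left[0]'(llen_pos S) = S.left[1 + k]'hk := by rw [← hℓeq, hke]
        have := (List.Nodup.getElem_inj_iff S.left_nodup).mp hkk
        omega
      · exact vert_ne_lift _ _ _ he.symm
  rcases List.mem_append.mp hmem with hm2 | hmv
  · -- segment m2 : lift 2 of all lines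
    obtain ⟨ℓ, _, rfl⟩ := List.mem_map.mp hm2
    rcases fin3cases (v 0) with h0 | h0 | h0
    · obtain ⟨ℓu, hA, he⟩ := out0 S h0 h
      exact lift_ne_lift (by decide) ℓu ℓ he.symm
    · rcases out1 S h0 h with ⟨h1, he⟩ | ⟨ℓu, hA, he⟩
      · exact lift_ne_lift (by decide) _ ℓ he.symm
      · exact lift_ne_lift (by decide) ℓu ℓ he.symm
    · rcases out2 S h0 h with ⟨h1, he⟩ | ⟨h1, he⟩
      · exact lift_ne_lift (by decide) _ ℓ he.symm
      · exact vert_ne_lift _ _ _ he.symm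
  · -- segment [vert (unrank (3^n - 1))]
    rw [List.mem_singleton] at hmv
    subst hmv
    rcases fin3cases (v 0) with h0 | h0 | h0
    · obtain ⟨ℓu, hA, he⟩ := out0 S h0 h
      exact vert_ne_lift _ _ _ he
    · rcases out1 S h0 h with ⟨h1, he⟩ | ⟨ℓu, hA, he⟩
      · exact vert_ne_lift _ _ _ he
      · exact vert_ne_lift _ _ _ he
    · rcases out2 S h0 h with ⟨h1, he⟩ | ⟨h1, he⟩
      · exact vert_ne_lift _ _ _ he
      · have hvv := vert_inj he.symm
        have hP : 0 < 3 ^ n := pow_pos (by norm_num) n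
        have hrt := S.rank_lt (Fin.tail v)
        have e1 : S.rank (S.unrank (S.rank (Fin.tail v) - 1)) =
            S.rank (Fin.tail v) - 1 := S.rank_unrank _ (by omega)
        have e2 : S.rank (S.unrank (3 ^ n - 1)) = 3 ^ n - 1 :=
          S.rank_unrank _ (by omega)
        have := congrArg S.rank hvv
        rw [e1, e2] at this
        omega

lemma stepLeft_length : (stepLeft S).length =
    (S.left.length - (excL S).length) + ((S.left.length - 1) +
      (Fintype.card (HLine n) + 1)) := by
  simp [stepLeft, List.length_append, List.length_map, List.length_drop,
    Finset.length_toList]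

noncomputable def stepScheme (hn : 3 ≤ n) : Scheme (n+1) where
  rank := stepRank S
  unrank := stepUnrank S
  A := stepA S
  left := stepLeft S
  rank_lt := stepRank_lt S
  unrank_rank := stepUnrank_rank S
  rank_unrank := stepRank_unrank S
  A_rank := stepA_rank S
  A_inj := stepA_inj S
  left_nodup := stepLeft_nodup S
  left_unused := stepLeft_unused S
  cover := step_cover S
  hexc := by rw [step_exc_card]; exact S.hexc
  hlen_lb := by
    rw [step_exc_card, stepLeft_length]
    have h1 := exc_le_llen S
    have h2 := one_le_exc S
    rw [← excL_len]
    omega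
  hlen_ub := by
    rw [step_exc_card, stepLeft_length, card_hline]
    have h1 := exc_le_llen S
    have h2 := one_le_exc S
    have h3 := S.hlen_ub
    rw [← excL_len] at h3 ⊢
    obtain ⟨m, rfl⟩ : ∃ m, n = m + 3 := ⟨n - 3, by omega⟩
    have e1 : m + 3 - 3 = m := by omega
    have e2 : m + 3 - 1 = m + 2 := by omega
    have e3 : m + 1 + 3 - 3 = m + 1 := by omega
    have e4 : m + 3 + 1 - 1 = m + 3 := by omega
    rw [e1, e2] at h3
    rw [e3, e4, e2]
    have e5 : (3:ℕ) ^ (m + 3) = 3 * 3 ^ (m + 2) := by ring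
    rw [e5]
    have e6 : (m + 3) * 3 ^ (m + 2) = m * 3 ^ (m + 2) + 3 * 3 ^ (m + 2) := by ring
    have e7 : (m + 1) * (3 * 3 ^ (m + 2)) =
        3 * (m * 3 ^ (m + 2)) + 3 * 3 ^ (m + 2) := by ring
    rw [e6, e7]
    set a := (3:ℕ) ^ (m + 2)
    set b := m * a
    omega

end Step


lemma scheme_exists : ∀ n, 3 ≤ n → Nonempty (Scheme n) := by
  intro n hn
  induction n, hn using Nat.le_induction with
  | base => exact ⟨baseScheme⟩
  | succ n hn ih => exact ⟨stepScheme ih.some hn⟩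

theorem competitionNumber_Hn3_upper (n : ℕ) (hn : 3 ≤ n) :
    competitionNumber (hammingGraph n 3) ≤ (n - 3) * 3 ^ (n - 1) + 6 :=
  scheme_bound n (scheme_exists n hn).some
end

section
/- Let n ≥ 3 and let G be a subgraph of the ternary Hamming graph H(n,3) on 10 vertices. Then the number of triangles in G is at most 6. -/
open SimpleGraph

section AuxTriangles
open Finset

def f10 : ℕ → ℕ
  | 0 => 0 | 1 => 0 | 2 => 0 | 3 => 1 | 4 => 1 | 5 => 2
  | 6 => 2 | 7 => 3 | 8 => 4 | 9 => 6 | _ => 6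

lemma f10_rec' : ∀ a < 11, ∀ b < 11, ∀ c < 11,
    a + b + c ≤ 10 → f10 a + f10 b + f10 c + min a (min b c) ≤ f10 (a + b + c) := by decide

lemma f10_rec (a b c : ℕ) (h : a + b + c ≤ 10) :
    f10 a + f10 b + f10 c + min a (min b c) ≤ f10 (a + b + c) :=
  f10_rec' a (by omega) b (by omega) c (by omega) h

lemma dist_init {n : ℕ} (x y : Fin (n+1) → Fin 3) (h : x (Fin.last n) = y (Fin.last n)) :
    hammingDist (Fin.init x) (Fin.init y) = hammingDist x y := by
  show (Finset.univ.filter fun i => Fin.init x i ≠ Fin.init y i).card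
      = (Finset.univ.filter fun i => x i ≠ y i).card
  apply Finset.card_bij (fun i _ => Fin.castSucc i)
  · intro i hi
    simp only [mem_filter, mem_univ, true_and] at hi ⊢
    exact hi
  · intro i _ j _ hij
    exact Fin.castSucc_injective _ hij
  · intro j hj
    simp only [mem_filter, mem_univ, true_and] at hj
    have hjl : j ≠ Fin.last n := by rintro rfl; exact hj h
    obtain ⟨i, rfl⟩ := Fin.exists_castSucc_eq.mpr hjl
    exact ⟨i, by simp only [mem_filter, mem_univ, true_and]; exact hj, rfl⟩

lemma init_eq_of_dist_one {n : ℕ} (x y : Fin (n+1) → Fin 3)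
    (h : hammingDist x y = 1) (hl : x (Fin.last n) ≠ y (Fin.last n)) :
    Fin.init x = Fin.init y := by
  have h' : (Finset.univ.filter fun i => x i ≠ y i).card = 1 := h
  obtain ⟨a, ha⟩ := Finset.card_eq_one.mp h'
  have hlast : Fin.last n ∈ Finset.univ.filter fun i => x i ≠ y i := by simp [hl]
  rw [ha, mem_singleton] at hlast
  funext i
  by_contra hne
  have hmem : Fin.castSucc i ∈ Finset.univ.filter fun i => x i ≠ y i := by
    simp only [mem_filter, mem_univ, true_and]; exact hne
  rw [ha, mem_singleton] at hmem
  exact Fin.ne_last_of_lt (Fin.castSucc_lt_last i) (hmem.trans hlast.symm)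

/-- Triangle finset of a point set. -/
def TF {n : ℕ} (P : Finset (Fin n → Fin 3)) : Finset (Finset (Fin n → Fin 3)) :=
  (P.powersetCard 3).filter (fun t => ∀ u ∈ t, ∀ v ∈ t, u ≠ v → hammingDist u v = 1)

lemma mem_TF {n : ℕ} {P : Finset (Fin n → Fin 3)} {t : Finset (Fin n → Fin 3)} :
    t ∈ TF P ↔ (t ⊆ P ∧ t.card = 3) ∧ ∀ u ∈ t, ∀ v ∈ t, u ≠ v → hammingDist u v = 1 := by
  simp [TF, Finset.mem_powersetCard]

lemma snoc_self_of_last {n : ℕ} {x : Fin (n+1) → Fin 3} {v : Fin 3} (h : x (Fin.last n) = v) :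
    Fin.snoc (Fin.init x) v = x := by
  rw [← h]; exact Fin.snoc_init_self x

lemma classify {n : ℕ} {t : Finset (Fin (n+1) → Fin 3)} (h3 : t.card = 3)
    (hadj : ∀ u ∈ t, ∀ v ∈ t, u ≠ v → hammingDist u v = 1) :
    (∃ v, ∀ x ∈ t, x (Fin.last n) = v) ∨ (∀ x ∈ t, ∀ y ∈ t, Fin.init x = Fin.init y) := by
  obtain ⟨x, y, z, hxy, hxz, hyz, rfl⟩ := Finset.card_eq_three.mp h3
  have hx : x ∈ ({x, y, z} : Finset _) := by simp
  have hy : y ∈ ({x, y, z} : Finset _) := by simp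
  have hz : z ∈ ({x, y, z} : Finset _) := by simp
  -- claim: if two lasts equal, third equal as well
  have claim : ∀ a ∈ ({x,y,z} : Finset _), ∀ b ∈ ({x,y,z} : Finset _), ∀ c ∈ ({x,y,z} : Finset _),
      a ≠ b → a ≠ c → b ≠ c → a (Fin.last n) = b (Fin.last n) → c (Fin.last n) = a (Fin.last n) := by
    intro a ha b hb c hc hab hac hbc habl
    by_contra hcl
    have h1 : Fin.init a = Fin.init c :=
      init_eq_of_dist_one a c (hadj a ha c hc hac) (fun h => hcl h.symm)
    have h2 : Fin.init b = Fin.init c :=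
      init_eq_of_dist_one b c (hadj b hb c hc hbc)
        (fun h => hcl (habl ▸ h).symm)
    apply hab
    calc a = Fin.snoc (Fin.init a) (a (Fin.last n)) := (Fin.snoc_init_self a).symm
      _ = Fin.snoc (Fin.init b) (b (Fin.last n)) := by rw [h1, h2, habl]
      _ = b := Fin.snoc_init_self b
  by_cases h1 : x (Fin.last n) = y (Fin.last n)
  · left
    refine ⟨x (Fin.last n), ?_⟩
    have hzl := claim x hx y hy z hz hxy hxz hyz h1
    intro w hw
    simp only [Finset.mem_insert, Finset.mem_singleton] at hw
    rcases hw with rfl | rfl | rfl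
    · rfl
    · exact h1.symm
    · exact hzl
  · by_cases h2 : x (Fin.last n) = z (Fin.last n)
    · exact absurd (claim x hx z hz y hy hxz hxy (Ne.symm hyz) h2).symm h1
    · by_cases h3' : y (Fin.last n) = z (Fin.last n)
      · exact absurd (claim y hy z hz x hx hyz (Ne.symm hxy) (Ne.symm hxz) h3') h1
      · right
        have e1 : Fin.init x = Fin.init y := init_eq_of_dist_one x y (hadj x hx y hy hxy) h1
        have e2 : Fin.init x = Fin.init z := init_eq_of_dist_one x z (hadj x hx z hz hxz) h2
        have e3 : Fin.init y = Fin.init z := init_eq_of_dist_one y z (hadj y hy z hz hyz) h3'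
        intro a ha b hb
        simp only [Finset.mem_insert, Finset.mem_singleton] at ha hb
        rcases ha with rfl | rfl | rfl <;> rcases hb with rfl | rfl | rfl <;>
          first | rfl | assumption | exact e1.symm | exact e2.symm | exact e3.symm

lemma TF_card_le : ∀ (n : ℕ) (P : Finset (Fin n → Fin 3)), P.card ≤ 10 →
    (TF P).card ≤ f10 P.card := by
  intro n
  induction n with
  | zero =>
    intro P _
    have hP1 : P.card ≤ 1 :=
      Finset.card_le_one.mpr (fun a _ b _ => funext fun i => i.elim0)
    have hempty : TF P = ∅ := by
      rw [Finset.eq_empty_iff_forall_notMem]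
      intro t ht
      obtain ⟨⟨hsub, hcard⟩, -⟩ := mem_TF.mp ht
      have := Finset.card_le_card hsub
      omega
    simp [hempty]
  | succ n IH =>
    intro P hP
    set L := Fin.last n with hLdef
    set Pv : Fin 3 → Finset (Fin (n+1) → Fin 3) := fun v => P.filter (fun x => x L = v) with hPv
    set Qv : Fin 3 → Finset (Fin n → Fin 3) := fun v => (Pv v).image Fin.init with hQv
    have hPvcard : ∀ v, (Pv v).card ≤ 10 :=
      fun v => le_trans (Finset.card_le_card (Finset.filter_subset _ _)) hP
    have hinj : ∀ v : Fin 3, Set.InjOn (fun x : Fin (n+1) → Fin 3 => Fin.init x) ↑(Pv v) := by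
      intro v x hx y hy hxy
      simp only [hPv, Finset.coe_filter, Set.mem_setOf_eq] at hx hy
      calc x = Fin.snoc (Fin.init x) v := (snoc_self_of_last hx.2).symm
        _ = Fin.snoc (Fin.init y) v := by have h : Fin.init x = Fin.init y := hxy; rw [h]
        _ = y := snoc_self_of_last hy.2
    have hQcard : ∀ v, (Qv v).card = (Pv v).card :=
      fun v => Finset.card_image_of_injOn (hinj v)
    set Tv : Fin 3 → Finset (Finset (Fin (n+1) → Fin 3)) :=
      fun v => (TF P).filter (fun t => ∀ x ∈ t, x L = v) with hTvdef
    set Tvert : Finset (Finset (Fin (n+1) → Fin 3)) :=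
      (TF P).filter (fun t => ¬ ∃ v, ∀ x ∈ t, x L = v) with hTvertdef
    -- coverage
    have hcover : TF P ⊆ Tvert ∪ (Tv 0 ∪ (Tv 1 ∪ Tv 2)) := by
      intro t ht
      by_cases h : ∃ v, ∀ x ∈ t, x L = v
      · obtain ⟨v, hv⟩ := h
        have hmem : t ∈ Tv v := Finset.mem_filter.mpr ⟨ht, hv⟩
        fin_cases v
        · exact Finset.mem_union_right _ (Finset.mem_union_left _ hmem)
        · exact Finset.mem_union_right _ (Finset.mem_union_right _ (Finset.mem_union_left _ hmem))
        · exact Finset.mem_union_right _ (Finset.mem_union_right _ (Finset.mem_union_right _ hmem))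
      · exact Finset.mem_union_left _ (Finset.mem_filter.mpr ⟨ht, h⟩)
    have hsplit : (TF P).card ≤ Tvert.card + ((Tv 0).card + ((Tv 1).card + (Tv 2).card)) := by
      refine le_trans (Finset.card_le_card hcover) ?_
      refine le_trans (Finset.card_union_le _ _) ?_
      gcongr
      refine le_trans (Finset.card_union_le _ _) ?_
      gcongr
      exact Finset.card_union_le _ _
    -- horizontal bound
    have hTvb : ∀ v, (Tv v).card ≤ f10 (Pv v).card := by
      intro v
      have hstep : (Tv v).card ≤ (TF (Qv v)).card := by
        apply Finset.card_le_card_of_injOn (fun t => t.image Fin.init)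
        · intro t ht
          obtain ⟨ht', hlast⟩ := Finset.mem_filter.mp ht
          obtain ⟨⟨hsub, hcard⟩, hadj⟩ := mem_TF.mp ht'
          have hinjt : Set.InjOn (fun x : Fin (n+1) → Fin 3 => Fin.init x) ↑t := by
            intro x hx y hy hxy
            calc x = Fin.snoc (Fin.init x) v := (snoc_self_of_last (hlast x hx)).symm
              _ = Fin.snoc (Fin.init y) v := by have h : Fin.init x = Fin.init y := hxy; rw [h]
              _ = y := snoc_self_of_last (hlast y hy)
          refine mem_TF.mpr ⟨⟨?_, ?_⟩, ?_⟩
          · intro b hb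
            obtain ⟨x, hx, rfl⟩ := Finset.mem_image.mp hb
            exact Finset.mem_image.mpr ⟨x, Finset.mem_filter.mpr ⟨hsub hx, hlast x hx⟩, rfl⟩
          · rw [Finset.card_image_of_injOn hinjt, hcard]
          · intro u hu w hw huw
            obtain ⟨x, hx, rfl⟩ := Finset.mem_image.mp hu
            obtain ⟨y, hy, rfl⟩ := Finset.mem_image.mp hw
            have hxy : x ≠ y := fun h => huw (h ▸ rfl)
            rw [dist_init x y ((hlast x hx).trans (hlast y hy).symm)]
            exact hadj x hx y hy hxy
        · intro t ht s hs hts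
          simp only [Finset.mem_coe] at ht hs
          have recover : ∀ r ∈ Tv v, r = (r.image Fin.init).image (fun b => Fin.snoc b v) := by
            intro r hr
            obtain ⟨hr', hlast⟩ := Finset.mem_filter.mp hr
            apply Finset.eq_of_subset_of_card_le
            · intro x hx
              exact Finset.mem_image.mpr ⟨Fin.init x, Finset.mem_image.mpr ⟨x, hx, rfl⟩,
                snoc_self_of_last (hlast x hx)⟩
            · exact le_trans Finset.card_image_le Finset.card_image_le
          have hts' : t.image Fin.init = s.image Fin.init := hts
          rw [recover t ht, recover s hs, hts']
      refine le_trans hstep (le_trans (IH (Qv v) ?_) ?_)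
      · rw [hQcard]; exact hPvcard v
      · rw [hQcard]
    -- vertical bound
    have hTvertb : ∀ v : Fin 3, Tvert.card ≤ (Pv v).card := by
      intro v
      have hstep : Tvert.card ≤ ((Pv v).image (fun x => ({x} : Finset _))).card := by
        apply Finset.card_le_card_of_injOn
          (fun t => t.image (fun x => Fin.snoc (Fin.init x) v))
        · intro t ht
          obtain ⟨ht', hnv⟩ := Finset.mem_filter.mp ht
          obtain ⟨⟨hsub, hcard⟩, hadj⟩ := mem_TF.mp ht'
          have hinits : ∀ x ∈ t, ∀ y ∈ t, Fin.init x = Fin.init y :=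
            (classify hcard hadj).resolve_left hnv
          obtain ⟨x0, hx0⟩ := Finset.card_pos.mp (by omega : 0 < t.card)
          have hconst : ∀ x ∈ t, Fin.snoc (Fin.init x) v = Fin.snoc (Fin.init x0) v :=
            fun x hx => by rw [hinits x hx x0 hx0]
          have himg : t.image (fun x => Fin.snoc (Fin.init x) v)
              = {Fin.snoc (Fin.init x0) v} := by
            apply Finset.Subset.antisymm
            · intro b hb
              obtain ⟨x, hx, rfl⟩ := Finset.mem_image.mp hb
              simpa using hconst x hx
            · intro b hb
              rw [Finset.mem_singleton] at hb
              exact hb ▸ Finset.mem_image.mpr ⟨x0, hx0, rfl⟩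
          have hlastinj : Set.InjOn (fun x : Fin (n+1) → Fin 3 => x L) ↑t := by
            intro x hx y hy hxy
            calc x = Fin.snoc (Fin.init x) (x L) := (Fin.snoc_init_self x).symm
              _ = Fin.snoc (Fin.init y) (y L) := by
                  rw [hinits x hx y hy]; simp only [hxy]
              _ = y := Fin.snoc_init_self y
          have huniv : t.image (fun x => x L) = Finset.univ := by
            apply Finset.eq_univ_of_card
            rw [Finset.card_image_of_injOn hlastinj, hcard]
            simp
          have hvmem : v ∈ t.image (fun x => x L) := huniv ▸ Finset.mem_univ v
          obtain ⟨x, hx, hxv⟩ := Finset.mem_image.mp hvmem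
          have hsnocmem : Fin.snoc (Fin.init x0) v ∈ t := by
            have : Fin.snoc (Fin.init x0) v = x := by
              rw [← hinits x hx x0 hx0]
              exact snoc_self_of_last hxv
            rw [this]; exact hx
          simp only [Finset.mem_coe]; rw [himg]
          refine Finset.mem_image.mpr ⟨Fin.snoc (Fin.init x0) v, ?_, rfl⟩
          refine Finset.mem_filter.mpr ⟨hsub hsnocmem, ?_⟩
          exact Fin.snoc_last v (Fin.init x0)
        · intro t ht s hs hts
          simp only [Finset.mem_coe] at ht hs
          have recover : ∀ r ∈ Tvert, ∀ x0 ∈ r,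
              r = Finset.univ.image (fun w : Fin 3 => Fin.snoc (Fin.init x0) w) := by
            intro r hr x0 hx0
            obtain ⟨hr', hnv⟩ := Finset.mem_filter.mp hr
            obtain ⟨⟨hsub, hcard⟩, hadj⟩ := mem_TF.mp hr'
            have hinits : ∀ x ∈ r, ∀ y ∈ r, Fin.init x = Fin.init y :=
              (classify hcard hadj).resolve_left hnv
            apply Finset.eq_of_subset_of_card_le
            · intro x hx
              refine Finset.mem_image.mpr ⟨x L, Finset.mem_univ _, ?_⟩
              rw [hinits x0 hx0 x hx]
              exact Fin.snoc_init_self x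
            · refine le_trans Finset.card_image_le ?_
              simp [hcard]
          obtain ⟨ht', hnvt⟩ := Finset.mem_filter.mp ht
          obtain ⟨⟨hsubt, hcardt⟩, hadjt⟩ := mem_TF.mp ht'
          obtain ⟨hs', hnvs⟩ := Finset.mem_filter.mp hs
          obtain ⟨⟨hsubs, hcards⟩, hadjs⟩ := mem_TF.mp hs'
          obtain ⟨x0, hx0⟩ := Finset.card_pos.mp (by omega : 0 < t.card)
          obtain ⟨y0, hy0⟩ := Finset.card_pos.mp (by omega : 0 < s.card)
          have hts' : t.image (fun x => Fin.snoc (Fin.init x) v)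
              = s.image (fun x => Fin.snoc (Fin.init x) v) := hts
          have hxb : Fin.snoc (Fin.init x0) v ∈ s.image (fun x => Fin.snoc (Fin.init x) v) := by
            rw [← hts']; exact Finset.mem_image.mpr ⟨x0, hx0, rfl⟩
          obtain ⟨y1, hy1, hy1eq⟩ := Finset.mem_image.mp hxb
          have hbase : Fin.init x0 = Fin.init y1 := by
            have := congrArg Fin.init hy1eq
            simpa [Fin.init_snoc] using this.symm
          rw [recover t ht x0 hx0, recover s hs y1 hy1, hbase]
      refine le_trans hstep ?_
      exact le_trans (Finset.card_image_le) le_rfl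
    -- fiber sum
    have hsum : (Pv 0).card + (Pv 1).card + (Pv 2).card = P.card := by
      have h := Finset.card_eq_sum_card_fiberwise
        (f := fun x : Fin (n+1) → Fin 3 => x L) (t := Finset.univ) (s := P)
        (fun x _ => Finset.mem_univ _)
      rw [Fin.sum_univ_three] at h
      simp only [hPv]
      exact h.symm
    have hrec := f10_rec (Pv 0).card (Pv 1).card (Pv 2).card (by omega)
    have hmin : Tvert.card ≤ min (Pv 0).card (min (Pv 1).card (Pv 2).card) :=
      le_min (hTvertb 0) (le_min (hTvertb 1) (hTvertb 2))
    have h0 := hTvb 0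
    have h1 := hTvb 1
    have h2 := hTvb 2
    rw [← hsum]
    omega

end AuxTriangles

theorem triangles_le_six (n : ℕ) (hn : 3 ≤ n)
    (G : (hammingGraph n 3).Subgraph) (hv : G.verts.ncard = 10) :
    {t : Finset (Fin n → Fin 3) |
      t.card = 3 ∧ ∀ u ∈ t, ∀ v ∈ t, u ≠ v → G.Adj u v}.ncard ≤ 6 := by
  classical
  have hfin : G.verts.Finite := Set.finite_of_ncard_ne_zero (by rw [hv]; norm_num)
  set P := hfin.toFinset with hPdef
  have hPcard : P.card = 10 := by
    rw [← Set.ncard_coe_finset P, Set.Finite.coe_toFinset]; exact hv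
  have hsub : {t : Finset (Fin n → Fin 3) |
      t.card = 3 ∧ ∀ u ∈ t, ∀ v ∈ t, u ≠ v → G.Adj u v} ⊆ ↑(TF P) := by
    rintro t ⟨h3, hadj⟩
    have htP : t ⊆ P := by
      intro u hu
      have hpos : 0 < (t.erase u).card := by
        rw [Finset.card_erase_of_mem hu, h3]; norm_num
      obtain ⟨w, hw⟩ := Finset.card_pos.mp hpos
      have hwne : w ≠ u := Finset.ne_of_mem_erase hw
      have hwt : w ∈ t := Finset.mem_of_mem_erase hw
      have hadj' := hadj u hu w hwt (Ne.symm hwne)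
      exact (Set.Finite.mem_toFinset hfin).mpr (G.edge_vert hadj')
    refine Finset.mem_coe.mpr (mem_TF.mpr ⟨⟨htP, h3⟩, ?_⟩)
    intro u hu w hw huw
    exact G.adj_sub (hadj u hu w hw huw)
  calc {t : Finset (Fin n → Fin 3) |
      t.card = 3 ∧ ∀ u ∈ t, ∀ v ∈ t, u ≠ v → G.Adj u v}.ncard
      ≤ (↑(TF P) : Set _).ncard := Set.ncard_le_ncard hsub (Finset.finite_toSet _)
    _ = (TF P).card := Set.ncard_coe_finset _
    _ ≤ f10 P.card := TF_card_le n P (le_of_eq hPcard)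
    _ = 6 := by rw [hPcard]; rfl
end

section
/- For every n ≥ 3, the competition number of the ternary Hamming graph H(n,3) is at least (n−3)·3^{n−1} + 6. -/
open SimpleGraph

namespace CNLB
open Finset Function Sum

abbrev Vn (n : ℕ) := Fin n → Fin 3

def onLine {n : ℕ} (j : Fin n) (p : Vn n) (v : Vn n) : Prop := ∀ i, i ≠ j → v i = p i

lemma hd_def {n : ℕ} (u v : Vn n) :
    hammingDist u v = (univ.filter fun i => u i ≠ v i).card := rfl

lemma dist_one_iff {n : ℕ} {u v : Vn n} :
    hammingDist u v = 1 ↔ ∃ j, u j ≠ v j ∧ ∀ i, i ≠ j → u i = v i := by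
  rw [hd_def, Finset.card_eq_one]
  constructor
  · rintro ⟨j, hj⟩
    have hjm : j ∈ univ.filter fun i => u i ≠ v i := hj ▸ Finset.mem_singleton_self j
    refine ⟨j, (Finset.mem_filter.mp hjm).2, fun i hij => ?_⟩
    by_contra hne
    have : i ∈ univ.filter fun i => u i ≠ v i := Finset.mem_filter.mpr ⟨Finset.mem_univ _, hne⟩
    rw [hj, Finset.mem_singleton] at this
    exact hij this
  · rintro ⟨j, hj, hoff⟩
    refine ⟨j, ?_⟩
    ext i
    simp only [Finset.mem_filter, Finset.mem_univ, true_and, Finset.mem_singleton]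
    constructor
    · intro hne; by_contra hij; exact hne (hoff i hij)
    · rintro rfl; exact hj

lemma dist_ne_one_of_two {n : ℕ} {u v : Vn n} {j j' : Fin n} (hjj : j ≠ j')
    (h1 : u j ≠ v j) (h2 : u j' ≠ v j') : hammingDist u v ≠ 1 := by
  intro h
  obtain ⟨j0, hj0, hoff⟩ := dist_one_iff.mp h
  by_cases hj : j = j0
  · subst hj; exact h2 (hoff j' (Ne.symm hjj))
  · exact h1 (hoff j hj)

lemma agree_off {n : ℕ} {a b c : Vn n} {j : Fin n} (h1 : a j ≠ b j)
    (h2 : ∀ i, i ≠ j → a i = b i) (hac : hammingDist a c = 1)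
    (hbc : hammingDist b c = 1) : ∀ i, i ≠ j → c i = a i := by
  obtain ⟨j', hj', hoff⟩ := dist_one_iff.mp hac
  have hjj : j' = j := by
    by_contra hne
    have hbj' : b j' ≠ c j' := by
      rw [← h2 j' hne]; exact hj'
    have hbj : b j ≠ c j := by
      rw [← hoff j (fun h => hne h.symm)]; exact fun h => h1 h.symm
    exact dist_ne_one_of_two (fun h => hne h.symm) hbj hbj' hbc
  subst hjj
  exact fun i hij => (hoff i hij).symm

lemma onLine_update {n : ℕ} (j : Fin n) (p : Vn n) (t : Fin 3) :
    onLine j p (Function.update p j t) :=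
  fun i hij => Function.update_of_ne hij t p

lemma onLine_dist_one {n : ℕ} {j : Fin n} {p u v : Vn n} (hu : onLine j p u)
    (hv : onLine j p v) (huv : u ≠ v) : hammingDist u v = 1 := by
  have hj : u j ≠ v j := by
    intro h
    exact huv (funext fun i => by
      by_cases hij : i = j
      · rwa [hij]
      · rw [hu i hij, hv i hij])
  exact dist_one_iff.mpr ⟨j, hj, fun i hij => (hu i hij).trans (hv i hij).symm⟩

lemma line_eq_of_two {n : ℕ} {j j' : Fin n} {p p' a b : Vn n} (hab : a ≠ b)
    (hp : p j = 0) (hp' : p' j' = 0) (h1 : onLine j p a) (h2 : onLine j p b)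
    (h1' : onLine j' p' a) (h2' : onLine j' p' b) :
    (⟨j, p⟩ : Fin n × Vn n) = ⟨j', p'⟩ := by
  have hjj : j = j' := by
    by_contra hne
    exact hab (funext fun i => by
      by_cases hij : i = j
      · subst hij
        rw [h1' i (fun h => hne h), h2' i (fun h => hne h)]
      · rw [h1 i hij, h2 i hij])
  subst hjj
  have : p = p' := funext fun i => by
    by_cases hij : i = j
    · subst hij; rw [hp, hp']
    · rw [← h1 i hij, h1' i hij]
  rw [this]

/-! ### Lines and their count -/

def LinesF (n : ℕ) : Finset (Fin n × Vn n) :=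
  Finset.univ.filter fun jp => jp.2 jp.1 = 0

def lineSubEquiv {n : ℕ} (j : Fin n) : {p : Vn n // p j = 0} ≃ ({i : Fin n // i ≠ j} → Fin 3) where
  toFun p i := p.1 i.1
  invFun g := ⟨fun i => if h : i = j then 0 else g ⟨i, h⟩, by simp⟩
  left_inv p := Subtype.ext (funext fun i => by
    by_cases h : i = j
    · subst h; simp [p.2]
    · simp [h])
  right_inv g := funext fun i => by
    have := i.2
    simp [this]

lemma card_LinesF {n : ℕ} : (LinesF n).card = n * 3 ^ (n - 1) := by
  classical
  have hfib : (LinesF n).card = ∑ j : Fin n, ((LinesF n).filter fun jp => jp.1 = j).card :=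
    Finset.card_eq_sum_card_fiberwise (fun x _ => Finset.mem_univ _)
  have hper : ∀ j : Fin n, ((LinesF n).filter fun jp => jp.1 = j).card = 3 ^ (n - 1) := by
    intro j
    have h1 : ((LinesF n).filter fun jp => jp.1 = j).card
        = ((univ : Finset (Vn n)).filter fun p => p j = 0).card := by
      apply Finset.card_bij (fun (jp : Fin n × Vn n) _ => jp.2)
      · rintro ⟨j0, p⟩ hm
        simp only [LinesF, Finset.mem_filter, Finset.mem_univ, true_and] at hm
        obtain ⟨hl, hj0⟩ := hm
        subst hj0
        simp [hl]
      · rintro ⟨j0, p⟩ hm ⟨j1, q⟩ hm' h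
        simp only [LinesF, Finset.mem_filter, Finset.mem_univ, true_and] at hm hm'
        cases hm.2; cases hm'.2
        simp_all
      · intro p hp
        simp only [Finset.mem_filter, Finset.mem_univ, true_and] at hp
        exact ⟨⟨j, p⟩, by simp [LinesF, hp], rfl⟩
    rw [h1]
    have h2 : ((univ : Finset (Vn n)).filter fun p => p j = 0).card
        = Fintype.card {p : Vn n // p j = 0} := (Fintype.card_subtype _).symm
    rw [h2, Fintype.card_congr (lineSubEquiv j), Fintype.card_fun]
    have h3 : Fintype.card {i : Fin n // i ≠ j} = n - 1 := by
      have := Fintype.card_subtype_compl (fun i : Fin n => i = j)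
      simp only [Fintype.card_subtype_eq, Fintype.card_fin] at this
      exact this
    rw [h3, Fintype.card_fin]
  rw [hfib]
  simp [hper, Finset.sum_const, mul_comm]

/-! ### The geometric lemma: at most 7 lines within 12 points -/

def Bfun : ℕ → ℕ
  | 0 => 0 | 1 => 0 | 2 => 0 | 3 => 1 | 4 => 1 | 5 => 2 | 6 => 2
  | 7 => 3 | 8 => 4 | 9 => 6 | 10 => 6 | 11 => 7 | _ => 7

lemma Bfun_rec : ∀ a b c : ℕ, a + b + c ≤ 12 →
    min a (min b c) + (Bfun a + Bfun b + Bfun c) ≤ Bfun (a + b + c) := by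
  have H : ∀ a b c : Fin 13, a.1 + b.1 + c.1 ≤ 12 →
      min a.1 (min b.1 c.1) + (Bfun a.1 + Bfun b.1 + Bfun c.1) ≤ Bfun (a.1 + b.1 + c.1) := by
    decide
  intro a b c h
  exact H ⟨a, by omega⟩ ⟨b, by omega⟩ ⟨c, by omega⟩ h

def NL (n : ℕ) (P : Finset (Vn n)) : ℕ :=
  ((LinesF n).filter fun jp : Fin n × Vn n => ∀ t : Fin 3, Function.update jp.2 jp.1 t ∈ P).card

lemma upd0 {n : ℕ} (p : Vn (n + 1)) (a : Fin 3) :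
    Function.update p 0 a = Fin.cons a (Fin.tail p) := by
  funext m
  cases m using Fin.cases with
  | zero => simp
  | succ i => simp [Function.update_of_ne (Fin.succ_ne_zero i), Fin.tail]

lemma updsucc {n : ℕ} (p : Vn (n + 1)) (i : Fin n) (t : Fin 3) :
    Function.update p i.succ t = Fin.cons (p 0) (Function.update (Fin.tail p) i t) := by
  funext m
  cases m using Fin.cases with
  | zero => simp [Function.update_of_ne (Ne.symm (Fin.succ_ne_zero i))]
  | succ m =>
    by_cases h : m = i
    · subst h; simp [Fin.tail]
    · simp [Function.update_of_ne (fun hh => h (Fin.succ_injective _ hh)),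
        Function.update_of_ne h, Fin.tail]

lemma NL_le : ∀ (n : ℕ) (P : Finset (Vn n)), P.card ≤ 12 → NL n P ≤ Bfun P.card := by
  intro n
  induction n with
  | zero =>
    intro P _
    have h : NL 0 P ≤ Fintype.card (Fin 0 × Vn 0) := by unfold NL; exact Finset.card_le_univ _
    have h0 : Fintype.card (Fin 0 × Vn 0) = 0 := by simp
    rw [h0] at h
    exact le_trans h (Nat.zero_le _)
  | succ n ih =>
    intro P hP
    classical
    set layer : Fin 3 → Finset (Vn n) :=
      fun a => (P.filter fun f => f 0 = a).image Fin.tail with hlayer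
    have hmem : ∀ (a : Fin 3) (g : Vn n), g ∈ layer a ↔ Fin.cons a g ∈ P := by
      intro a g
      simp only [hlayer, Finset.mem_image, Finset.mem_filter]
      constructor
      · rintro ⟨f, ⟨hf, hf0⟩, rfl⟩
        rwa [← hf0, Fin.cons_self_tail]
      · intro h
        exact ⟨Fin.cons a g, ⟨h, by simp⟩, by simp⟩
    have hcardlayer : ∀ a : Fin 3, (layer a).card = (P.filter fun f => f 0 = a).card := by
      intro a
      apply Finset.card_image_of_injOn
      intro f hf f' hf' hff
      simp only [Finset.coe_filter, Set.mem_setOf_eq] at hf hf'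
      rw [← Fin.cons_self_tail f, ← Fin.cons_self_tail f', hf.2, hf'.2, hff]
    have hsum : (layer 0).card + (layer 1).card + (layer 2).card = P.card := by
      have := Finset.card_eq_sum_card_fiberwise
        (f := fun f : Vn (n+1) => f 0) (s := P) (t := univ) (fun x _ => Finset.mem_univ _)
      rw [this, Fin.sum_univ_three, hcardlayer 0, hcardlayer 1, hcardlayer 2]
    set C : Finset (Vn n) := layer 0 ∩ layer 1 ∩ layer 2 with hC
    set SG : Finset ((_ : Fin 3) × (Fin n × Vn n)) :=
      Finset.univ.sigma (fun a : Fin 3 =>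
        (LinesF n).filter fun jp : Fin n × Vn n => ∀ t : Fin 3, Function.update jp.2 jp.1 t ∈ layer a) with hSG
    set T : Finset (Vn n ⊕ ((_ : Fin 3) × (Fin n × Vn n))) :=
      C.map ⟨Sum.inl, Sum.inl_injective⟩ ∪ SG.map ⟨Sum.inr, Sum.inr_injective⟩ with hT
    set F : Fin (n + 1) × Vn (n + 1) → Vn n ⊕ ((_ : Fin 3) × (Fin n × Vn n)) :=
      fun jp => Fin.cases (Sum.inl (Fin.tail jp.2))
        (fun i => Sum.inr ⟨jp.2 0, (i, Fin.tail jp.2)⟩) jp.1 with hF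
    have hstep1 : NL (n + 1) P ≤ T.card := by
      unfold NL
      apply Finset.card_le_card_of_injOn F
      · rintro ⟨j, p⟩ hm; rw [Finset.mem_coe] at hm ⊢
        simp only [NL, LinesF, Finset.mem_filter, Finset.mem_univ, true_and] at hm
        obtain ⟨hp0, hline⟩ := hm
        cases j using Fin.cases with
        | zero =>
          simp only [hF, Fin.cases_zero, hT]
          apply Finset.mem_union_left
          rw [Finset.mem_map]
          refine ⟨Fin.tail p, ?_, rfl⟩
          simp only [hC, Finset.mem_inter]
          refine ⟨⟨?_, ?_⟩, ?_⟩ <;>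
            · rw [hmem]
              rw [← upd0 p _]
              exact hline _
        | succ i =>
          simp only [hF, Fin.cases_succ, hT]
          apply Finset.mem_union_right
          rw [Finset.mem_map]
          refine ⟨⟨p 0, (i, Fin.tail p)⟩, ?_, rfl⟩
          rw [hSG, Finset.mem_sigma]
          refine ⟨Finset.mem_univ _, ?_⟩
          rw [Finset.mem_filter]
          constructor
          · simp only [LinesF, Finset.mem_filter, Finset.mem_univ, true_and]
            exact hp0
          · intro t
            rw [hmem]
            rw [← updsucc p i t]
            exact hline t
      · rintro ⟨j, p⟩ hm ⟨j', p'⟩ hm' hFeq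
        simp only [NL, LinesF, Finset.coe_filter, Set.mem_setOf_eq, Finset.mem_filter,
          Finset.mem_univ, true_and] at hm hm'
        cases j using Fin.cases with
        | zero =>
          cases j' using Fin.cases with
          | zero =>
            simp only [hF, Fin.cases_zero, Sum.inl.injEq] at hFeq
            have : p = p' := by
              rw [← Fin.cons_self_tail p, ← Fin.cons_self_tail p', hFeq,
                show p 0 = p' 0 from hm.1.trans hm'.1.symm]
            rw [this]
          | succ i' => simp [hF] at hFeq
        | succ i =>
          cases j' using Fin.cases with
          | zero => simp [hF] at hFeq
          | succ i' =>
            simp only [hF, Fin.cases_succ] at hFeq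
            have hsig : (⟨p 0, (i, Fin.tail p)⟩ : (_ : Fin 3) × (Fin n × Vn n))
                = ⟨p' 0, (i', Fin.tail p')⟩ := Sum.inr_injective hFeq
            obtain ⟨h0, h1⟩ := Sigma.ext_iff.mp hsig
            have h0' : p 0 = p' 0 := h0
            have h2 : (i, Fin.tail p) = (i', Fin.tail p') := eq_of_heq h1
            have hii : i = i' := (Prod.ext_iff.mp h2).1
            have htt : Fin.tail p = Fin.tail p' := (Prod.ext_iff.mp h2).2
            have : p = p' := by
              rw [← Fin.cons_self_tail p, ← Fin.cons_self_tail p', h0', htt]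
            rw [hii, this]
    have hstep2 : T.card ≤ C.card + (NL n (layer 0) + NL n (layer 1) + NL n (layer 2)) := by
      refine le_trans (Finset.card_union_le _ _) ?_
      rw [Finset.card_map, Finset.card_map, hSG, Finset.card_sigma, Fin.sum_univ_three]
      unfold NL
      exact le_refl _
    have hCmin : C.card ≤ min (layer 0).card (min (layer 1).card (layer 2).card) := by
      refine le_min ?_ (le_min ?_ ?_)
      · exact Finset.card_le_card (Finset.inter_subset_left.trans Finset.inter_subset_left)
      · exact Finset.card_le_card (Finset.inter_subset_left.trans Finset.inter_subset_right)
      · exact Finset.card_le_card Finset.inter_subset_right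
    have hlay0 : (layer 0).card ≤ 12 := by omega
    have hlay1 : (layer 1).card ≤ 12 := by omega
    have hlay2 : (layer 2).card ≤ 12 := by omega
    calc NL (n + 1) P ≤ T.card := hstep1
      _ ≤ C.card + (NL n (layer 0) + NL n (layer 1) + NL n (layer 2)) := hstep2
      _ ≤ min (layer 0).card (min (layer 1).card (layer 2).card)
          + (Bfun (layer 0).card + Bfun (layer 1).card + Bfun (layer 2).card) := by
        refine Nat.add_le_add hCmin ?_
        exact Nat.add_le_add (Nat.add_le_add (ih _ hlay0) (ih _ hlay1)) (ih _ hlay2)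
      _ ≤ Bfun ((layer 0).card + (layer 1).card + (layer 2).card) := by
        refine Bfun_rec _ _ _ ?_
        omega
      _ = Bfun P.card := by rw [hsum]

/-! ### Rank function from an acyclic digraph -/

lemma exists_rank {α : Type*} [Fintype α] {D : α → α → Prop}
    (hD : IsAcyclicDigraph D) :
    ∃ ρ : α → ℕ, Function.Injective ρ ∧ ∀ u x, D u x → ρ x < ρ u := by
  classical
  set E : α → α → Prop := fun x u => D u x with hE
  have hcyc : ∀ a, ¬ Relation.TransGen E a a := by
    intro a h
    exact hD a (Relation.transGen_swap.mp h)
  have hanti : ∀ a b, Relation.ReflTransGen E a b → Relation.ReflTransGen E b a → a = b := by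
    intro a b h1 h2
    by_contra hne
    rcases Relation.ReflTransGen.cases_head h1 with rfl | ⟨c, hac, hcb⟩
    · exact hne rfl
    · exact hcyc a (Relation.TransGen.head' hac (hcb.trans h2))
  haveI : IsPartialOrder α (Relation.ReflTransGen E) :=
    { refl := fun a => Relation.ReflTransGen.refl
      trans := fun a b c hab hbc => hab.trans hbc
      antisymm := hanti }
  obtain ⟨s, hs, hrs⟩ := extend_partialOrder (Relation.ReflTransGen E)
  haveI := hs
  set ρ : α → ℕ := fun w => (univ.filter fun w' => s w' w ∧ w' ≠ w).card with hρdef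
  have hmono : ∀ a b, s a b → a ≠ b → ρ a < ρ b := by
    intro a b hab hne
    apply Finset.card_lt_card
    have hsub : (univ.filter fun w' => s w' a ∧ w' ≠ a) ⊆ (univ.filter fun w' => s w' b ∧ w' ≠ b) := by
      intro w' hw'
      simp only [Finset.mem_filter, Finset.mem_univ, true_and] at hw' ⊢
      refine ⟨IsTrans.trans _ _ _ hw'.1 hab, ?_⟩
      rintro rfl
      exact hne (Std.Antisymm.antisymm _ _ hab hw'.1)
    rw [Finset.ssubset_iff_of_subset hsub]
    refine ⟨a, Finset.mem_filter.mpr ⟨Finset.mem_univ _, hab, hne⟩, ?_⟩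
    simp only [Finset.mem_filter, Finset.mem_univ, true_and]
    rintro ⟨-, h⟩
    exact h rfl
  have hinj : Function.Injective ρ := by
    intro a b hab
    by_contra hne
    rcases Std.Total.total (r := s) a b with h | h
    · exact absurd hab (Nat.ne_of_lt (hmono a b h hne))
    · exact absurd hab.symm (Nat.ne_of_lt (hmono b a h (Ne.symm hne)))
  refine ⟨ρ, hinj, ?_⟩
  intro u x hDux
  have hsxu : s x u := hrs x u (Relation.ReflTransGen.single (show E x u from hDux))
  have hne : x ≠ u := by
    rintro rfl
    exact hcyc x (Relation.TransGen.single (show E x x from hDux))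
  exact hmono x u hsxu hne

/-! ### The n-th largest element -/

lemma exists_nth_largest (S : Finset ℕ) : ∀ (j : ℕ), 1 ≤ j → j ≤ S.card →
    ∃ t ∈ S, (S.filter fun r => t ≤ r).card = j := by
  intro j
  induction j with
  | zero => intro h; exact absurd h (by omega)
  | succ j ihj =>
    intro h1 hcard
    by_cases hj : j = 0
    · subst hj
      have hne : S.Nonempty := Finset.card_pos.mp (by omega)
      refine ⟨S.max' hne, S.max'_mem hne, ?_⟩
      have heq : S.filter (fun r => S.max' hne ≤ r) = {S.max' hne} := by
        ext r
        simp only [Finset.mem_filter, Finset.mem_singleton]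
        constructor
        · rintro ⟨hr, hle⟩
          exact le_antisymm (S.le_max' r hr) hle
        · rintro rfl
          exact ⟨S.max'_mem hne, le_refl _⟩
      rw [heq, Finset.card_singleton]
    · obtain ⟨t, htS, htc⟩ := ihj (by omega) (by omega)
      set S' := S.filter (fun r => r < t) with hS'
      have hsplit : S'.card + j = S.card := by
        have hdis : Disjoint S' (S.filter fun r => t ≤ r) := by
          rw [Finset.disjoint_left]
          intro a ha hb
          simp only [hS', Finset.mem_filter] at ha hb
          omega
        have hun : S' ∪ S.filter (fun r => t ≤ r) = S := by
          ext a
          simp only [hS', Finset.mem_union, Finset.mem_filter]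
          constructor
          · rintro (h | h) <;> exact h.1
          · intro ha
            rcases lt_or_ge a t with h | h
            · exact Or.inl ⟨ha, h⟩
            · exact Or.inr ⟨ha, h⟩
        have hcu := Finset.card_union_of_disjoint hdis
        rw [hun] at hcu
        omega
      have hS'ne : S'.Nonempty := Finset.card_pos.mp (by omega)
      set t' := S'.max' hS'ne with ht'
      have ht'S' : t' ∈ S' := S'.max'_mem hS'ne
      have ht'lt : t' < t := (Finset.mem_filter.mp ht'S').2
      have ht'S : t' ∈ S := (Finset.mem_filter.mp ht'S').1
      refine ⟨t', ht'S, ?_⟩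
      have heq : S.filter (fun r => t' ≤ r) = insert t' (S.filter fun r => t ≤ r) := by
        ext r
        simp only [Finset.mem_filter, Finset.mem_insert]
        constructor
        · rintro ⟨hr, hle⟩
          rcases lt_or_ge r t with h | h
          · left
            have hrS' : r ∈ S' := Finset.mem_filter.mpr ⟨hr, h⟩
            exact (le_antisymm hle (S'.le_max' r hrS')).symm
        
          · exact Or.inr ⟨hr, h⟩
        · rintro (rfl | ⟨hr, hle⟩)
          · exact ⟨ht'S, le_refl _⟩
          · exact ⟨hr, le_trans (le_of_lt ht'lt) hle⟩
      have hnm : t' ∉ S.filter (fun r => t ≤ r) := by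
        simp only [Finset.mem_filter]
        rintro ⟨-, h⟩
        omega
      rw [heq, Finset.card_insert_of_notMem hnm, htc]

/-! ### Preys -/

def PreyFor {n k : ℕ} (D : (Vn n ⊕ Fin k) → (Vn n ⊕ Fin k) → Prop) (j : Fin n) (p : Vn n)
    (x : Vn n ⊕ Fin k) : Prop :=
  (∃ a b : Vn n, a ≠ b ∧ D (inl a) x ∧ D (inl b) x) ∧
  ∀ w, D w x → ∃ c, w = inl c ∧ onLine j p c

lemma preyFor_unique {n k : ℕ} {D : (Vn n ⊕ Fin k) → (Vn n ⊕ Fin k) → Prop}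
    {j j' : Fin n} {p p' : Vn n} {x : Vn n ⊕ Fin k} (hp : p j = 0) (hp' : p' j' = 0)
    (h : PreyFor D j p x) (h' : PreyFor D j' p' x) : (⟨j, p⟩ : Fin n × Vn n) = ⟨j', p'⟩ := by
  obtain ⟨⟨a, b, hab, ha, hb⟩, hall⟩ := h
  obtain ⟨-, hall'⟩ := h'
  obtain ⟨a1, ha1, hla⟩ := hall _ ha
  obtain rfl : a1 = a := (Sum.inl_injective ha1).symm
  obtain ⟨b1, hb1, hlb⟩ := hall _ hb
  obtain rfl : b1 = b := (Sum.inl_injective hb1).symm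
  obtain ⟨a2, ha2, hla'⟩ := hall' _ ha
  obtain rfl : a2 = a1 := (Sum.inl_injective ha2).symm
  obtain ⟨b2, hb2, hlb'⟩ := hall' _ hb
  obtain rfl : b2 = b1 := (Sum.inl_injective hb2).symm
  exact line_eq_of_two hab hp hp' hla hlb hla' hlb'

lemma exists_prey {n k : ℕ} {D : (Vn n ⊕ Fin k) → (Vn n ⊕ Fin k) → Prop}
    (hAdj : ∀ x y : Vn n ⊕ Fin k,
      (x ≠ y ∧ ∃ z, D x z ∧ D y z) ↔ ∃ u v : Vn n, x = inl u ∧ y = inl v ∧ hammingDist u v = 1)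
    (j : Fin n) (p : Vn n) (t0 t1 : Fin 3) (hne01 : t0 ≠ t1) :
    ∃ x, D (inl (Function.update p j t0)) x ∧ PreyFor D j p x := by
  set a := Function.update p j t0 with hadef
  set b := Function.update p j t1 with hbdef
  have haj : a j = t0 := Function.update_self j t0 p
  have hbj : b j = t1 := Function.update_self j t1 p
  have hoffab : ∀ i, i ≠ j → a i = b i := fun i hij => by
    rw [hadef, hbdef, Function.update_of_ne hij, Function.update_of_ne hij]
  have habj : a j ≠ b j := by rw [haj, hbj]; exact hne01
  have hab : a ≠ b := fun h => habj (congrFun h j)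
  have hd : hammingDist a b = 1 := dist_one_iff.mpr ⟨j, habj, hoffab⟩
  obtain ⟨hne', z, hz1, hz2⟩ := (hAdj (inl a) (inl b)).mpr ⟨a, b, rfl, rfl, hd⟩
  refine ⟨z, hz1, ⟨a, b, hab, hz1, hz2⟩, ?_⟩
  intro w hw
  by_cases hwa : w = inl a
  · exact ⟨a, hwa, onLine_update j p t0⟩
  by_cases hwb : w = inl b
  · exact ⟨b, hwb, onLine_update j p t1⟩
  obtain ⟨c, a', hc, ha', hd1⟩ := (hAdj w (inl a)).mp ⟨hwa, z, hw, hz1⟩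
  obtain rfl : a' = a := Sum.inl_injective ha'.symm
  obtain ⟨c2, b', hc2, hb', hd2⟩ := (hAdj w (inl b)).mp ⟨hwb, z, hw, hz2⟩
  obtain rfl : b' = b := Sum.inl_injective hb'.symm
  rw [hc] at hc2
  have hcc : c2 = c := (Sum.inl_injective hc2).symm
  rw [hcc] at hd2
  have hd1' : hammingDist a c = 1 := by rwa [hammingDist_comm] at hd1
  have hd2' : hammingDist b c = 1 := by rwa [hammingDist_comm] at hd2
  have hoffc := agree_off habj hoffab hd1' hd2'
  refine ⟨c, hc, fun i hij => ?_⟩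
  rw [hoffc i hij, hadef, Function.update_of_ne hij]

/-! ### The main lower bound -/

lemma main_bound {n k : ℕ} (hn : 3 ≤ n) (D : (Vn n ⊕ Fin k) → (Vn n ⊕ Fin k) → Prop)
    (hac : IsAcyclicDigraph D)
    (hEq : competitionGraph D = addIsolated (hammingGraph n 3) k) :
    n * 3 ^ (n - 1) + 6 ≤ 3 ^ n + k := by
  classical
  have hAdj : ∀ x y : Vn n ⊕ Fin k,
      (x ≠ y ∧ ∃ z, D x z ∧ D y z) ↔ ∃ u v : Vn n, x = inl u ∧ y = inl v ∧ hammingDist u v = 1 := by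
    intro x y
    have h1 := congrFun (congrFun (congrArg SimpleGraph.Adj hEq) x) y
    exact iff_of_eq h1
  obtain ⟨ρ, hρinj, hρ⟩ := exists_rank hac
  have hcardV : Fintype.card (Vn n) = 3 ^ n := by
    rw [Fintype.card_fun, Fintype.card_fin, Fintype.card_fin]
  have h27 : 13 ≤ 3 ^ n := le_trans (by norm_num) (Nat.pow_le_pow_right (by norm_num) hn)
  set R : Finset ℕ := (univ : Finset (Vn n)).image (fun v => ρ (inl v)) with hR
  have hinjR : Function.Injective (fun v : Vn n => ρ (inl v)) :=
    fun a b h => Sum.inl_injective (hρinj h)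
  have hcardR : R.card = 3 ^ n := by
    rw [hR, Finset.card_image_of_injective _ hinjR, Finset.card_univ, hcardV]
  obtain ⟨t, htR, ht13⟩ := exists_nth_largest R 13 (by norm_num) (by rw [hcardR]; exact h27)
  obtain ⟨v13, -, hv13⟩ := Finset.mem_image.mp htR
  set RV : Finset (Vn n) := univ.filter (fun v => t ≤ ρ (inl v)) with hRV
  have hRVcard : RV.card = 13 := by
    have himg : R.filter (fun r => t ≤ r) = RV.image (fun v => ρ (inl v)) := by
      ext r
      simp only [hR, hRV, Finset.mem_filter, Finset.mem_image, Finset.mem_univ, true_and]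
      constructor
      · rintro ⟨⟨v, rfl⟩, htr⟩; exact ⟨v, htr, rfl⟩
      · rintro ⟨v, htv, rfl⟩; exact ⟨⟨v, rfl⟩, htv⟩
    rw [himg, Finset.card_image_of_injective _ hinjR] at ht13
    exact ht13
  set Z : Finset (Vn n) := univ.filter (fun v => t < ρ (inl v)) with hZ
  have hZcard : Z.card = 12 := by
    have hins : RV = insert v13 Z := by
      ext v
      simp only [hRV, hZ, Finset.mem_filter, Finset.mem_univ, true_and, Finset.mem_insert]
      constructor
      · intro h
        rcases lt_or_eq_of_le h with h' | h'
        · exact Or.inr h'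
        · exact Or.inl (hinjR (hv13.trans h')).symm
      · rintro (rfl | h)
        · exact le_of_eq hv13.symm
        · exact le_of_lt h
    have hnm : v13 ∉ Z := by
      simp only [hZ, Finset.mem_filter, Finset.mem_univ, true_and, hv13]
      exact lt_irrefl t
    rw [hins, Finset.card_insert_of_notMem hnm] at hRVcard
    omega
  have hchoice : ∀ jp : Fin n × Vn n, jp ∈ LinesF n →
      ∃ x, PreyFor D jp.1 jp.2 x ∧
        ((∃ t3 : Fin 3, Function.update jp.2 jp.1 t3 ∉ Z) → ρ x < t) := by
    rintro ⟨j, p⟩ _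
    by_cases hcont : ∃ t3 : Fin 3, Function.update p j t3 ∉ Z
    · obtain ⟨t3, ht3⟩ := hcont
      set t4 : Fin 3 := if t3 = 0 then 1 else 0 with ht4
      have hne34 : t3 ≠ t4 := by
        rw [ht4]; split
        · simp_all
        · simp_all
      obtain ⟨x, hx1, hx2⟩ := exists_prey hAdj j p t3 t4 hne34
      refine ⟨x, hx2, fun _ => ?_⟩
      have hlt1 : ρ x < ρ (inl (Function.update p j t3)) := hρ _ _ hx1
      have hlt2 : ρ (inl (Function.update p j t3)) ≤ t := by
        by_contra hgt
        push_neg at hgt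
        exact ht3 (Finset.mem_filter.mpr ⟨Finset.mem_univ _, hgt⟩)
      omega
    · obtain ⟨x, -, hx2⟩ := exists_prey hAdj j p 0 1 (by decide)
      exact ⟨x, hx2, fun h => absurd h hcont⟩
  choose Φ hΦ1 hΦ2 using hchoice
  set img : Finset (Vn n ⊕ Fin k) :=
    (LinesF n).attach.image (fun jp => Φ jp.1 jp.2) with himg
  have hinjΦ : Function.Injective (fun jp : {x // x ∈ LinesF n} => Φ jp.1 jp.2) := by
    rintro ⟨⟨j, p⟩, hjp⟩ ⟨⟨j', p'⟩, hjp'⟩ h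
    have hp : p j = 0 := by
      simpa only [LinesF, Finset.mem_filter, Finset.mem_univ, true_and] using hjp
    have hp' : p' j' = 0 := by
      simpa only [LinesF, Finset.mem_filter, Finset.mem_univ, true_and] using hjp'
    have h1 := hΦ1 _ hjp
    have h2 := hΦ1 _ hjp'
    simp only at h
    rw [h] at h1
    exact Subtype.ext (preyFor_unique hp hp' h1 h2)
  have himgcard : img.card = n * 3 ^ (n - 1) := by
    rw [himg, Finset.card_image_of_injective _ hinjΦ, Finset.card_attach, card_LinesF]
  set SW : Finset (Vn n ⊕ Fin k) := univ.filter (fun w => t ≤ ρ w) with hSW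
  have hSWcard : 13 ≤ SW.card := by
    rw [← hRVcard]
    apply Finset.card_le_card_of_injOn (fun v => inl v)
    · intro v hv
      simp only [hRV, Finset.mem_coe, Finset.mem_filter, Finset.mem_univ, true_and] at hv
      simp only [hSW, Finset.mem_coe, Finset.mem_filter, Finset.mem_univ, true_and]
      exact hv
    · intro a _ b _ h
      exact Sum.inl_injective h
  set CL : Finset (Fin n × Vn n) := (LinesF n).filter
      (fun jp : Fin n × Vn n => ∀ t3 : Fin 3, Function.update jp.2 jp.1 t3 ∈ Z) with hCL
  have hintercard : (img ∩ SW).card ≤ 7 := by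
    have hsub : img ∩ SW ⊆ CL.attach.image
        (fun jp => Φ jp.1 (Finset.mem_of_mem_filter _ jp.2)) := by
      intro y hy
      obtain ⟨hyimg, hySW⟩ := Finset.mem_inter.mp hy
      rw [himg, Finset.mem_image] at hyimg
      obtain ⟨⟨jp, hjp⟩, -, hyeq⟩ := hyimg
      have hcont : ∀ t3 : Fin 3, Function.update jp.2 jp.1 t3 ∈ Z := by
        by_contra hnc
        push_neg at hnc
        have hlow := hΦ2 jp hjp hnc
        rw [hyeq] at hlow
        simp only [hSW, Finset.mem_filter] at hySW
        omega
      refine Finset.mem_image.mpr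
        ⟨⟨jp, Finset.mem_filter.mpr ⟨hjp, hcont⟩⟩, Finset.mem_attach _ _, ?_⟩
      exact hyeq
    calc (img ∩ SW).card ≤ _ := Finset.card_le_card hsub
      _ ≤ CL.attach.card := Finset.card_image_le
      _ = CL.card := Finset.card_attach
      _ = NL n Z := rfl
      _ ≤ Bfun Z.card := NL_le n Z (by rw [hZcard])
      _ = 7 := by rw [hZcard]; rfl
  have hunion : (img ∪ SW).card ≤ 3 ^ n + k := by
    have hle := Finset.card_le_univ (img ∪ SW)
    rwa [Fintype.card_sum, hcardV, Fintype.card_fin] at hle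
  have hkey := Finset.card_union_add_card_inter img SW
  have hfinal : n * 3 ^ (n - 1) + 13 ≤ 3 ^ n + k + 7 := by
    calc n * 3 ^ (n - 1) + 13 ≤ img.card + SW.card := by
          rw [himgcard]
          exact Nat.add_le_add_left hSWcard _
      _ = (img ∪ SW).card + (img ∩ SW).card := hkey.symm
      _ ≤ (3 ^ n + k) + 7 := Nat.add_le_add hunion hintercard
  have h2 : (n * 3 ^ (n - 1) + 6) + 7 ≤ (3 ^ n + k) + 7 := by
    have : (n * 3 ^ (n - 1) + 6) + 7 = n * 3 ^ (n - 1) + 13 := by ring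
    rw [this]
    exact hfinal
  exact Nat.add_le_add_iff_right.mp h2

/-! ### A digraph realizing the Hamming graph -/

lemma exists_digraph (n : ℕ) : ∃ (k : ℕ) (D : (Vn n ⊕ Fin k) → (Vn n ⊕ Fin k) → Prop),
    IsAcyclicDigraph D ∧ competitionGraph D = addIsolated (hammingGraph n 3) k := by
  classical
  set k := (LinesF n).card with hk
  set E : {x // x ∈ LinesF n} ≃ Fin k := Finset.equivFinOfCardEq rfl with hE
  set D : (Vn n ⊕ Fin k) → (Vn n ⊕ Fin k) → Prop := fun w1 w2 =>
    ∃ (u : Vn n) (i : Fin k), w1 = inl u ∧ w2 = inr i ∧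
      onLine (E.symm i).1.1 (E.symm i).1.2 u with hD
  have hstruct : ∀ a b, Relation.TransGen D a b → (∃ u, a = inl u) ∧ (∃ i, b = inr i) := by
    intro a b h
    induction h with
    | single h => obtain ⟨u, i, rfl, rfl, -⟩ := h; exact ⟨⟨u, rfl⟩, ⟨i, rfl⟩⟩
    | tail h1 h2 ih =>
      obtain ⟨u, i, heq, rfl, -⟩ := h2
      obtain ⟨ha, ⟨i', hb'⟩⟩ := ih
      rw [heq] at hb'
      exact absurd hb' (by simp)
  refine ⟨k, D, ?_, ?_⟩
  · intro v hv
    obtain ⟨⟨u, hu⟩, ⟨i, hi⟩⟩ := hstruct v v hv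
    rw [hu] at hi
    exact absurd hi (by simp)
  · apply SimpleGraph.ext
    funext x y
    apply propext
    constructor
    · rintro ⟨hxy, z, hx, hy⟩
      obtain ⟨u, i, rfl, rfl, hu⟩ := hx
      obtain ⟨v, i', hyv, hzi, hv⟩ := hy
      obtain rfl : i' = i := (Sum.inr_injective hzi).symm
      subst hyv
      refine ⟨u, v, rfl, rfl, ?_⟩
      have hne : u ≠ v := fun h => hxy (by rw [h])
      exact onLine_dist_one hu hv hne
    · rintro ⟨u, v, rfl, rfl, hd⟩
      have hd' : hammingDist u v = 1 := hd
      obtain ⟨j, hj, hoff⟩ := dist_one_iff.mp hd'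
      have hne : u ≠ v := fun h => hj (by rw [h])
      have hp : Function.update u j 0 j = (0 : Fin 3) := Function.update_self j 0 u
      have hmem : (⟨j, Function.update u j 0⟩ : Fin n × Vn n) ∈ LinesF n := by
        simp only [LinesF, Finset.mem_filter, Finset.mem_univ, true_and]
        exact hp
      refine ⟨fun h => hne (Sum.inl_injective h),
        inr (E ⟨⟨j, Function.update u j 0⟩, hmem⟩), ?_, ?_⟩
      · refine ⟨u, _, rfl, rfl, ?_⟩
        rw [Equiv.symm_apply_apply]
        exact fun i hij => (Function.update_of_ne hij 0 u).symm
      · refine ⟨v, _, rfl, rfl, ?_⟩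
        rw [Equiv.symm_apply_apply]
        exact fun i hij => ((hoff i hij).symm).trans ((Function.update_of_ne hij 0 u).symm)

end CNLB


theorem competitionNumber_Hn3_lower (n : ℕ) (hn : 3 ≤ n) :
    (n - 3) * 3 ^ (n - 1) + 6 ≤ competitionNumber (hammingGraph n 3) := by
  obtain ⟨k0, D0, hac0, heq0⟩ := CNLB.exists_digraph n
  unfold competitionNumber
  refine le_csInf ⟨k0, ⟨D0, hac0, heq0⟩⟩ ?_
  rintro k ⟨D, hac, heq⟩
  have h := CNLB.main_bound hn D hac heq
  obtain ⟨m, rfl⟩ := Nat.exists_eq_add_of_le hn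
  have h1 : (3 + m) - 3 = m := by omega
  have h2 : (3 + m) - 1 = m + 2 := by omega
  rw [h1, h2]
  rw [h2] at h
  have h3 : (3 : ℕ) ^ (3 + m) = 27 * 3 ^ m := by rw [pow_add]; ring
  have h4 : (3 : ℕ) ^ (m + 2) = 3 ^ m * 9 := by rw [pow_add]; ring
  rw [h3, h4] at h
  rw [h4]
  have h5 : (3 + m) * (3 ^ m * 9) = 27 * 3 ^ m + m * (3 ^ m * 9) := by ring
  rw [h5] at h
  generalize hX : m * (3 ^ m * 9) = X at h ⊢
  generalize hY : 27 * 3 ^ m = Y at h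
  omega
end
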